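/- arXiv:1205.4464 — 6 statements merged into one kernel-verified Lean document; each statement's English description precedes it below -/
import Mathlib

section
/- With the setup of the previous statement, the map A ↦ (A·T_p)_p is a bijection from the set of open subgroups A of Ĝ with π(A) = K onto the set of tuples (A_p)_p with A_p open in Ĝ, π(A_p) = K, [π⁻¹(K):A_p] a power of p, and A_p = π⁻¹(K) for all but finitely many p; moreover [π⁻¹(K):A] = ∏_p [π⁻¹(K):A·T_p]. -/
open scoped Pointwise

set_option linter.unusedSectionVars false

section Aux

variable {G : Type*} [Group G] [TopologicalSpace G] [IsTopologicalGroup G]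
    [CompactSpace G] [T2Space G]
    {Nhat : Subgroup G} {Np : Nat.Primes → Subgroup G}
    (hle : ∀ q, Np q ≤ Nhat)
    (e : ↥Nhat ≃* ∀ q : Nat.Primes, ↥(Np q))

lemma esymm_single (hcompat : ∀ (q : Nat.Primes) (x : ↥(Np q)),
      e ⟨(x : G), hle q x.2⟩ = Pi.mulSingle q x)
    (p : Nat.Primes) (x : ↥(Np p)) :
    ((e.symm (Pi.mulSingle p x) : ↥Nhat) : G) = x := by
  have h2 : e.symm (e ⟨(x : G), hle p x.2⟩) = e.symm (Pi.mulSingle p x) := by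
    rw [hcompat p x]
  rw [MulEquiv.symm_apply_apply] at h2
  rw [← h2]

/-- elements of distinct `Np q` commute -/
lemma comm_of_ne (hcompat : ∀ (q : Nat.Primes) (x : ↥(Np q)),
      e ⟨(x : G), hle q x.2⟩ = Pi.mulSingle q x)
    {q q' : Nat.Primes} (hqq : q ≠ q') {x y : G}
    (hx : x ∈ Np q) (hy : y ∈ Np q') : Commute x y := by
  have hxN : x ∈ Nhat := hle q hx
  have hyN : y ∈ Nhat := hle q' hy
  have h1 : e (⟨x, hxN⟩ * ⟨y, hyN⟩) = e (⟨y, hyN⟩ * ⟨x, hxN⟩) := by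
    rw [map_mul, map_mul]
    have ex : e ⟨x, hxN⟩ = Pi.mulSingle q (⟨x, hx⟩ : ↥(Np q)) := hcompat q ⟨x, hx⟩
    have ey : e ⟨y, hyN⟩ = Pi.mulSingle q' (⟨y, hy⟩ : ↥(Np q')) := hcompat q' ⟨y, hy⟩
    rw [ex, ey]
    exact (Pi.mulSingle_commute hqq _ _)
  have h2 := e.injective h1
  have h3 := Subtype.ext_iff.mp h2
  exact (by simpa [mul_comm] using h3 : x * y = y * x)

/-- an element of `Np p` commutes with any element of `Nhat` whose `p`-component is `1`. -/
lemma comm_of_comp_one (hcompat : ∀ (q : Nat.Primes) (x : ↥(Np q)),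
      e ⟨(x : G), hle q x.2⟩ = Pi.mulSingle q x)
    {p : Nat.Primes} {x : G} (hx : x ∈ Np p) {y : ↥Nhat} (hy : e y p = 1) :
    Commute x (y : G) := by
  have hxN : x ∈ Nhat := hle p hx
  have h1 : e (⟨x, hxN⟩ * y) = e (y * ⟨x, hxN⟩) := by
    rw [map_mul, map_mul]
    have ex : e ⟨x, hxN⟩ = Pi.mulSingle p (⟨x, hx⟩ : ↥(Np p)) := hcompat p ⟨x, hx⟩
    rw [ex]
    funext q
    by_cases hq : q = p
    · subst hq
      simp [hy]
    · simp [Pi.mulSingle_apply, hq]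
  have h2 := Subtype.ext_iff.mp (e.injective h1)
  exact (by simpa [mul_comm] using h2 : x * (y : G) = y * x)

variable (Np) in
/-- the subgroup `T(P)`: closure of the subgroup generated by `Np q`, `q ∈ P`. -/
noncomputable def TP (P : Set Nat.Primes) : Subgroup G :=
  (⨆ q ∈ P, Np q).topologicalClosure

lemma iSup_normal (hnorm : ∀ q, (Np q).Normal) (P : Set Nat.Primes) :
    (⨆ q ∈ P, Np q).Normal := by
  constructor
  intro x hx g
  have key : ∀ y ∈ (⨆ q ∈ P, Np q), g * y * g⁻¹ ∈ (⨆ q ∈ P, Np q) := by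
    intro y hy
    rw [iSup_subtype'] at hy ⊢
    refine Subgroup.iSup_induction _ (C := fun z => g * z * g⁻¹ ∈ ⨆ q : P, Np ↑q) hy
      (fun q z hz => ?_) (by simpa using Subgroup.one_mem _) (fun a b ha hb => ?_)
    · exact Subgroup.mem_iSup_of_mem q ((hnorm q).conj_mem z hz g)
    · show g * (a * b) * g⁻¹ ∈ _
      have hab : g * (a * b) * g⁻¹ = (g * a * g⁻¹) * (g * b * g⁻¹) := by group
      rw [hab]; exact mul_mem ha hb
  exact key x hx

lemma TP_normal (hnorm : ∀ q, (Np q).Normal) (P : Set Nat.Primes) :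
    (TP Np P).Normal :=
  have := iSup_normal hnorm P
  Subgroup.is_normal_topologicalClosure _

include hle in
lemma TP_le_Nhat (hNopen : IsOpen (Nhat : Set G)) (P : Set Nat.Primes) :
    TP Np P ≤ Nhat :=
  Subgroup.topologicalClosure_minimal _ (iSup₂_le fun q _ => hle q)
    (Nhat.isClosed_of_isOpen hNopen)

lemma Np_le_TP {P : Set Nat.Primes} {q : Nat.Primes} (hq : q ∈ P) :
    Np q ≤ TP Np P :=
  le_trans (le_iSup₂ (f := fun q _ => Np q) q hq) (Subgroup.le_topologicalClosure _)

lemma TP_mono {P P' : Set Nat.Primes} (h : P ⊆ P') : TP Np P ≤ TP Np P' :=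
  Subgroup.topologicalClosure_minimal _
    (le_trans (iSup₂_le fun q hq => le_iSup₂ (f := fun q _ => Np q) q (h hq))
      (Subgroup.le_topologicalClosure _))
    (Subgroup.isClosed_topologicalClosure _)

/-- subgroup of `Nhat` of elements whose components off `P` vanish -/
def compSubgroup (P : Set Nat.Primes) : Subgroup ↥Nhat where
  carrier := {y | ∀ q ∉ P, e y q = 1}
  one_mem' := by intro q hq; simp
  mul_mem' := by intro a b ha hb q hq; rw [map_mul]; simp [ha q hq, hb q hq]
  inv_mem' := by intro a ha q hq; rw [map_inv]; simp [ha q hq]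

lemma finsupp_mem_sup (hcompat : ∀ (q : Nat.Primes) (x : ↥(Np q)),
      e ⟨(x : G), hle q x.2⟩ = Pi.mulSingle q x)
    (P : Set Nat.Primes) (I : Finset Nat.Primes) :
    ∀ g : (∀ q, ↥(Np q)), (∀ q, q ∉ I → g q = 1) → (∀ q, g q ≠ 1 → q ∈ P) →
      ((e.symm g : ↥Nhat) : G) ∈ ⨆ q ∈ P, Np q := by
  classical
  induction I using Finset.induction_on with
  | empty =>
    intro g hg _
    have : g = 1 := funext fun q => hg q (by simp)
    rw [this, map_one]
    exact Subgroup.one_mem _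
  | @insert a I ha IH =>
    intro g hg hgP
    set g' : ∀ q, ↥(Np q) := (Pi.mulSingle a (g a))⁻¹ * g with hg'def
    have hg'a : g' a = 1 := by simp [hg'def]
    have hg'q : ∀ q, q ≠ a → g' q = g q := by
      intro q hq; simp [hg'def, Pi.mulSingle_apply, hq]
    have h1 : ∀ q, q ∉ I → g' q = 1 := by
      intro q hq
      by_cases hqa : q = a
      · subst hqa; exact hg'a
      · rw [hg'q q hqa]; exact hg q (by simp [hqa, hq])
    have h2 : ∀ q, g' q ≠ 1 → q ∈ P := by
      intro q hq
      by_cases hqa : q = a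
      · subst hqa; exact absurd hg'a hq
      · exact hgP q (by rwa [← hg'q q hqa])
    have IH' := IH g' h1 h2
    have hsplit : g = Pi.mulSingle a (g a) * g' := by
      simp [hg'def]
    rw [hsplit, map_mul]
    push_cast
    refine mul_mem ?_ IH'
    rw [esymm_single hle e hcompat a (g a)]
    by_cases hga : g a = 1
    · rw [hga]
      simp only [OneMemClass.coe_one]
      exact Subgroup.one_mem _
    · exact le_iSup₂ (f := fun q _ => Np q) a (hgP a hga) (g a).2
  
end Aux

section Aux2

variable {G : Type*} [Group G] [TopologicalSpace G] [IsTopologicalGroup G]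
    [CompactSpace G] [T2Space G]
    {Nhat : Subgroup G} {Np : Nat.Primes → Subgroup G}
    (hle : ∀ q, Np q ≤ Nhat)
    (e : ↥Nhat ≃* ∀ q : Nat.Primes, ↥(Np q))

lemma compSubgroup_map_isClosed (hNopen : IsOpen (Nhat : Set G))
    (he : Continuous e) (P : Set Nat.Primes) :
    IsClosed (((compSubgroup e P).map Nhat.subtype : Subgroup G) : Set G) := by
  have hNc : IsClosed (Nhat : Set G) := Nhat.isClosed_of_isOpen hNopen
  have hcomp : CompactSpace ↥Nhat := isCompact_iff_compactSpace.mp hNc.isCompact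
  have hclosed : IsClosed ((compSubgroup e P : Set ↥Nhat)) := by
    have hset : (compSubgroup e P : Set ↥Nhat) =
        ⋂ (q : Nat.Primes) (_ : q ∉ P), (fun y => e y q) ⁻¹' {1} := by
      ext y
      simp only [Set.mem_iInter, Set.mem_preimage, Set.mem_singleton_iff]
      rfl
    rw [hset]
    exact isClosed_iInter fun q => isClosed_iInter fun _ =>
      IsClosed.preimage ((continuous_apply q).comp he) isClosed_singleton
  have hco : (((compSubgroup e P).map Nhat.subtype : Subgroup G) : Set G) =
      Nhat.subtype '' (compSubgroup e P) := Subgroup.coe_map _ _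
  rw [hco]
  exact (hclosed.isCompact.image continuous_subtype_val).isClosed

include hle in
lemma mem_TP_iff (hNopen : IsOpen (Nhat : Set G))
    (he : Continuous e) (he' : Continuous e.symm)
    (hcompat : ∀ (q : Nat.Primes) (x : ↥(Np q)),
      e ⟨(x : G), hle q x.2⟩ = Pi.mulSingle q x)
    {P : Set Nat.Primes} {x : G} :
    x ∈ TP Np P ↔ ∃ hx : x ∈ Nhat, ∀ q, q ∉ P → e ⟨x, hx⟩ q = 1 := by
  constructor
  · intro hx
    have hsub : TP Np P ≤ (compSubgroup e P).map Nhat.subtype := by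
      apply Subgroup.topologicalClosure_minimal
      · refine iSup₂_le fun q hq => ?_
        intro z hz
        refine Subgroup.mem_map.mpr ⟨⟨z, hle q hz⟩, ?_, rfl⟩
        intro q' hq'
        rw [hcompat q ⟨z, hz⟩]
        have hne : q' ≠ q := fun h => hq' (h ▸ hq)
        simp [Pi.mulSingle_apply, hne]
      · exact compSubgroup_map_isClosed e hNopen he P
    obtain ⟨y, hy, rfl⟩ := Subgroup.mem_map.mp (hsub hx)
    exact ⟨y.2, fun q hq => hy q hq⟩
  · rintro ⟨hx, hcond⟩
    have hcl : x ∈ closure ((⨆ q ∈ P, Np q : Subgroup G) : Set G) := by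
      rw [mem_closure_iff]
      intro U hU hxU
      classical
      set E : ↥Nhat ≃ₜ (∀ q, ↥(Np q)) :=
        { toEquiv := e.toEquiv, continuous_toFun := he, continuous_invFun := he' }
      have hV : IsOpen (Subtype.val ⁻¹' U : Set ↥Nhat) := hU.preimage continuous_subtype_val
      have hW : IsOpen (E '' (Subtype.val ⁻¹' U)) := E.isOpenMap _ hV
      have hfW : e ⟨x, hx⟩ ∈ E '' (Subtype.val ⁻¹' U) := ⟨⟨x, hx⟩, hxU, rfl⟩
      obtain ⟨I, u, hIu, hpi⟩ := isOpen_pi_iff.mp hW _ hfW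
      set g : ∀ q, ↥(Np q) := fun q => if q ∈ I then e ⟨x, hx⟩ q else 1 with hgdef
      have hgpi : g ∈ (I : Set _).pi u := by
        intro i hi
        simp only [Finset.mem_coe] at hi
        simp only [hgdef]
        rw [if_pos hi]
        exact (hIu i hi).2
      obtain ⟨z, hz, hze⟩ := hpi hgpi
      have hzg : z = e.symm g := by
        have : E.symm (E z) = E.symm g := by rw [hze]
        exact (by simpa using this : z = E.symm g)
      have hmem : (z : G) ∈ ⨆ q ∈ P, Np q := by
        rw [hzg]
        refine finsupp_mem_sup hle e hcompat P I g (fun q hq => by simp [hgdef, hq])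
          (fun q hq => ?_)
        by_cases hqI : q ∈ I
        · by_contra hqP
          refine hq ?_
          simp only [hgdef]
          rw [if_pos hqI]
          exact hcond q hqP
        · exact absurd (by simp [hgdef, hqI]) hq
      exact ⟨(z : G), hz, hmem⟩
    show x ∈ (⨆ q ∈ P, Np q : Subgroup G).topologicalClosure
    rw [← SetLike.mem_coe, Subgroup.topologicalClosure_coe]
    exact hcl

end Aux2

section Aux3

variable {G : Type*} [Group G] [TopologicalSpace G] [IsTopologicalGroup G]
    [CompactSpace G] [T2Space G]
    {Nhat : Subgroup G} {Np : Nat.Primes → Subgroup G}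
    (hle : ∀ q, Np q ≤ Nhat)
    (e : ↥Nhat ≃* ∀ q : Nat.Primes, ↥(Np q))

include hle in
/-- finite splitting: strip the components in `S` off `n` -/
lemma split_finset (hcompat : ∀ (q : Nat.Primes) (x : ↥(Np q)),
      e ⟨(x : G), hle q x.2⟩ = Pi.mulSingle q x)
    (S : Finset Nat.Primes) :
    ∀ n : ↥Nhat, ∃ r : ↥Nhat, (∀ q ∈ S, e r q = 1) ∧ (∀ q ∉ S, e r q = e n q) ∧
      (n : G) * (r : G)⁻¹ ∈
        Subgroup.closure ((fun q => ((e n q : ↥(Np q)) : G)) '' (S : Set Nat.Primes)) := by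
  classical
  induction S using Finset.induction_on with
  | empty =>
    intro n
    exact ⟨n, by simp, by simp, by simp [Subgroup.one_mem]⟩
  | @insert p S hp IH =>
    intro n
    set u : ↥Nhat := ⟨((e n p : ↥(Np p)) : G), hle p (e n p).2⟩ with hudef
    have heu : e u = Pi.mulSingle p (e n p) := hcompat p (e n p)
    set t : ↥Nhat := u⁻¹ * n with htdef
    have het : ∀ q, e t q = ((Pi.mulSingle p (e n p) : ∀ q, ↥(Np q)) q)⁻¹ * e n q := by
      intro q
      rw [htdef, map_mul, map_inv, heu]
      rfl
    have hetp : e t p = 1 := by rw [het p]; simp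
    have hetq : ∀ q, q ≠ p → e t q = e n q := by
      intro q hq
      rw [het q]
      simp [Pi.mulSingle_apply, hq]
    obtain ⟨r, hr1, hr2, hr3⟩ := IH t
    refine ⟨r, ?_, ?_, ?_⟩
    · intro q hq
      rcases Finset.mem_insert.mp hq with h | h
      · subst h
        rw [hr2 q hp, hetp]
      · exact hr1 q h
    · intro q hq
      have hqp : q ≠ p := fun h => hq (by rw [h]; exact Finset.mem_insert_self _ _)
      have hqS : q ∉ S := fun h => hq (Finset.mem_insert_of_mem h)
      rw [hr2 q hqS, hetq q hqp]
    · have hsub : ((fun q => ((e t q : ↥(Np q)) : G)) '' (S : Set Nat.Primes)) ⊆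
          ((fun q => ((e n q : ↥(Np q)) : G)) '' ((insert p S : Finset _) : Set Nat.Primes)) := by
        rintro z ⟨q, hq, rfl⟩
        have hqp : q ≠ p := fun h => hp (h ▸ hq)
        exact ⟨q, by simp [Finset.mem_coe.mp hq], congrArg _ (hetq q hqp).symm⟩
      have hcl : (t : G) * (r : G)⁻¹ ∈
          Subgroup.closure ((fun q => ((e n q : ↥(Np q)) : G)) ''
            ((insert p S : Finset _) : Set Nat.Primes)) :=
        Subgroup.closure_mono hsub hr3
      have hu : (u : G) ∈ Subgroup.closure ((fun q => ((e n q : ↥(Np q)) : G)) ''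
          ((insert p S : Finset _) : Set Nat.Primes)) := by
        apply Subgroup.subset_closure
        exact ⟨p, by simp, rfl⟩
      have hnsplit : (n : G) * (r : G)⁻¹ = (u : G) * ((t : G) * (r : G)⁻¹) := by
        have : (n : G) = (u : G) * (t : G) := by
          rw [htdef]
          push_cast
          group
        rw [this, mul_assoc]
      rw [hnsplit]
      exact mul_mem hu hcl

include hle in
/-- every open subgroup contains `T(P)` for a cofinite `P` -/
lemma exists_finset_TP_le (hNopen : IsOpen (Nhat : Set G))
    (he : Continuous e) (he' : Continuous e.symm)
    (hcompat : ∀ (q : Nat.Primes) (x : ↥(Np q)),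
      e ⟨(x : G), hle q x.2⟩ = Pi.mulSingle q x)
    {A : Subgroup G} (hA : IsOpen (A : Set G)) :
    ∃ S : Finset Nat.Primes, TP Np {q | q ∉ S} ≤ A := by
  classical
  have hV : IsOpen (Subtype.val ⁻¹' (A : Set G) : Set ↥Nhat) :=
    hA.preimage continuous_subtype_val
  set E : ↥Nhat ≃ₜ (∀ q, ↥(Np q)) :=
    { toEquiv := e.toEquiv, continuous_toFun := he, continuous_invFun := he' }
  have hW : IsOpen (E '' (Subtype.val ⁻¹' (A : Set G))) := E.isOpenMap _ hV
  have h1W : (1 : ∀ q, ↥(Np q)) ∈ E '' (Subtype.val ⁻¹' (A : Set G)) :=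
    ⟨1, by simpa using A.one_mem, map_one e⟩
  obtain ⟨I, u, hIu, hpi⟩ := isOpen_pi_iff.mp hW 1 h1W
  refine ⟨I, fun x hx => ?_⟩
  obtain ⟨hxN, hcond⟩ := (mem_TP_iff hle e hNopen he he' hcompat).mp hx
  have hmem : e ⟨x, hxN⟩ ∈ (I : Set Nat.Primes).pi u := by
    intro i hi
    simp only [Finset.mem_coe] at hi
    have : e ⟨x, hxN⟩ i = 1 := hcond i (by simp [hi])
    rw [this]
    simpa using (hIu i hi).2
  obtain ⟨z, hz, hze⟩ := hpi hmem
  have : z = ⟨x, hxN⟩ := E.injective (by rw [hze]; rfl)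
  rw [this] at hz
  exact hz

end Aux3



section Aux4

/-- `[Y ⊔ N : Y] = [N : Y ⊓ N]` for `N` normal, via an explicit coset bijection. -/
lemma relindex_sup_eq {G : Type*} [Group G] (N Y : Subgroup G) [N.Normal] :
    Y.relIndex (Y ⊔ N) = (Y ⊓ N).relIndex N := by
  have hNle : N ≤ Y ⊔ N := le_sup_right
  rw [Subgroup.relIndex, Subgroup.relIndex, Subgroup.index_eq_card, Subgroup.index_eq_card]
  have hcompat : ∀ a b : ↥N, QuotientGroup.leftRel ((Y ⊓ N).subgroupOf N) a b →
      QuotientGroup.leftRel (Y.subgroupOf (Y ⊔ N))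
        (⟨(a : G), hNle a.2⟩ : ↥(Y ⊔ N)) ⟨(b : G), hNle b.2⟩ := by
    intro a b hab
    rw [QuotientGroup.leftRel_apply] at hab ⊢
    rw [Subgroup.mem_subgroupOf] at hab ⊢
    have : (((⟨(a : G), hNle a.2⟩ : ↥(Y ⊔ N))⁻¹ * (⟨(b : G), hNle b.2⟩ : ↥(Y ⊔ N)) :
        ↥(Y ⊔ N)) : G) = ((a⁻¹ * b : ↥N) : G) := by push_cast; rfl
    rw [this]
    exact hab.1
  refine (Nat.card_congr (Equiv.ofBijective
    (Quotient.map' (fun (n : ↥N) => (⟨(n : G), hNle n.2⟩ : ↥(Y ⊔ N))) hcompat)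
    ⟨?_, ?_⟩)).symm
  · intro a b
    refine Quotient.inductionOn₂' a b fun x y hxy => ?_
    simp only [Quotient.map'_mk''] at hxy
    rw [Quotient.eq''] at hxy
    rw [QuotientGroup.leftRel_apply, Subgroup.mem_subgroupOf] at hxy
    have hxy' : (x : G)⁻¹ * (y : G) ∈ Y := by
      have : (((⟨(x : G), hNle x.2⟩ : ↥(Y ⊔ N))⁻¹ * (⟨(y : G), hNle y.2⟩ : ↥(Y ⊔ N)) :
          ↥(Y ⊔ N)) : G) = (x : G)⁻¹ * (y : G) := by push_cast; rfl
      rwa [this] at hxy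
    apply Quotient.sound'
    rw [QuotientGroup.leftRel_apply, Subgroup.mem_subgroupOf]
    have hco : ((x⁻¹ * y : ↥N) : G) = (x : G)⁻¹ * (y : G) := by push_cast; rfl
    rw [hco]
    exact Subgroup.mem_inf.mpr ⟨hxy', mul_mem (inv_mem x.2) y.2⟩
  · intro z
    refine Quotient.inductionOn' z fun x => ?_
    have hx : (x : G) ∈ (N : Set G) * (Y : Set G) := by
      rw [← Subgroup.normal_mul, sup_comm N Y]
      exact x.2
    obtain ⟨n, hn, y, hy, hny⟩ := hx
    refine ⟨Quotient.mk'' ⟨n, hn⟩, ?_⟩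
    rw [Quotient.map'_mk'']
    apply Quotient.sound'
    rw [QuotientGroup.leftRel_apply, Subgroup.mem_subgroupOf]
    show ((⟨n, hNle hn⟩ : ↥(Y ⊔ N)) : G)⁻¹ * (x : G) ∈ Y
    have hxny : (x : G) = n * y := hny.symm
    have : ((⟨n, hNle hn⟩ : ↥(Y ⊔ N)) : G)⁻¹ * (x : G) = y := by
      rw [hxny]; simp
    rw [this]
    exact hy

end Aux4

section Aux5

/-- in any group, an element of a finite sup of pairwise-commuting "q-torsion" normal
subgroups (for primes `q ≠ p`) has order not divisible by `p`. -/
lemma order_coprime_finsetsup {F : Type*} [Group F] {p : ℕ} (hp : p.Prime)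
    (M : Nat.Primes → Subgroup F) (hnorm : ∀ q, (M q).Normal)
    (hcomm : ∀ q q' : Nat.Primes, q ≠ q' → ∀ x ∈ M q, ∀ y ∈ M q', Commute x y)
    (hord : ∀ q : Nat.Primes, ∀ x ∈ M q, ¬ ((q : ℕ) = p) → ¬ (p ∣ orderOf x)) :
    ∀ (T : Finset Nat.Primes), (∀ q ∈ T, (q : ℕ) ≠ p) →
      ∀ z ∈ T.sup M, ¬ p ∣ orderOf z := by
  classical
  intro T
  induction T using Finset.induction_on with
  | empty =>
    intro _ z hz hdvd
    rw [Finset.sup_empty, Subgroup.mem_bot] at hz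
    subst hz
    rw [orderOf_one] at hdvd
    exact hp.one_lt.ne' (Nat.dvd_one.mp hdvd)
  | @insert a T ha IH =>
    intro hT z hz hdvd
    rw [Finset.sup_insert] at hz
    have := hnorm a
    have hzset : z ∈ (M a : Set F) * ↑(T.sup M) := by
      rw [← Subgroup.normal_mul]
      exact SetLike.mem_coe.mpr hz
    obtain ⟨x, hx, y, hy, hxy⟩ := hzset
    have hcent : (T.sup M : Subgroup F) ≤ Subgroup.centralizer {x} := by
      refine Finset.sup_le fun q hq => ?_
      intro w hw
      rw [Subgroup.mem_centralizer_iff]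
      rintro g hg
      rw [Set.mem_singleton_iff] at hg
      rw [hg]
      exact (hcomm a q (fun h => ha (h ▸ hq)) x hx w hw)
    have hcxy : Commute x y := by
      have := hcent hy
      rw [Subgroup.mem_centralizer_iff] at this
      exact (this x rfl)
    have hdd : orderOf z ∣ orderOf x * orderOf y := by
      rw [← hxy]
      exact hcxy.orderOf_mul_dvd_mul_orderOf
    have hpxy : p ∣ orderOf x * orderOf y := hdvd.trans hdd
    rcases (Nat.Prime.dvd_mul hp).mp hpxy with h | h
    · exact hord a x hx (hT a (Finset.mem_insert_self a T)) h
    · exact IH (fun q hq => hT q (Finset.mem_insert_of_mem hq)) y hy h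

end Aux5

section Aux6

variable {G : Type*} [Group G] [TopologicalSpace G] [IsTopologicalGroup G]
    [CompactSpace G] [T2Space G]
    {Nhat : Subgroup G} {Np : Nat.Primes → Subgroup G}
    (hle : ∀ q, Np q ≤ Nhat)
    (e : ↥Nhat ≃* ∀ q : Nat.Primes, ↥(Np q))

include hle in
lemma Np_eq_map (hcompat : ∀ (q : Nat.Primes) (x : ↥(Np q)),
      e ⟨(x : G), hle q x.2⟩ = Pi.mulSingle q x)
    (q : Nat.Primes) :
    Np q = (compSubgroup e ({q} : Set Nat.Primes)).map Nhat.subtype := by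
  ext x
  constructor
  · intro hx
    refine Subgroup.mem_map.mpr ⟨⟨x, hle q hx⟩, ?_, rfl⟩
    intro q' hq'
    rw [hcompat q ⟨x, hx⟩]
    have hne : q' ≠ q := hq'
    simp [Pi.mulSingle_apply, hne]
  · intro hx
    obtain ⟨y, hy, rfl⟩ := Subgroup.mem_map.mp hx
    have hey : e y = Pi.mulSingle q (e y q) := by
      funext q'
      by_cases h : q' = q
      · subst h; simp
      · rw [hy q' (by simpa using h)]
        simp [Pi.mulSingle_apply, h]
    have hy2 : y = e.symm (Pi.mulSingle q (e y q)) := by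
      rw [← hey, MulEquiv.symm_apply_apply]
    have hcoe : (Nhat.subtype y : G) = ((e y q : ↥(Np q)) : G) := by
      show (y : G) = _
      conv_lhs => rw [hy2]
      exact esymm_single hle e hcompat q (e y q)
    rw [hcoe]
    exact (e y q).2

include hle in
lemma Np_isClosed (hNopen : IsOpen (Nhat : Set G)) (he : Continuous e)
    (hcompat : ∀ (q : Nat.Primes) (x : ↥(Np q)),
      e ⟨(x : G), hle q x.2⟩ = Pi.mulSingle q x)
    (q : Nat.Primes) : IsClosed (Np q : Set G) := by
  rw [Np_eq_map hle e hcompat q]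
  exact compSubgroup_map_isClosed e hNopen he ({q} : Set Nat.Primes)

lemma subgroupOf_isOpen {A B : Subgroup G} (hA : IsOpen (A : Set G)) :
    IsOpen ((A.subgroupOf B : Subgroup ↥B) : Set ↥B) := by
  have hset : ((A.subgroupOf B : Subgroup ↥B) : Set ↥B) = Subtype.val ⁻¹' (A : Set G) := by
    ext z
    simp [Subgroup.mem_subgroupOf]
  rw [hset]
  exact hA.preimage continuous_subtype_val

lemma relindex_Np_pow
    (hproq : ∀ q : Nat.Primes, ∀ B : Subgroup (Np q),
      IsOpen (B : Set (Np q)) → ∃ k : ℕ, B.index = (q : ℕ) ^ k)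
    {C : Subgroup G} (hC : IsOpen (C : Set G)) (p : Nat.Primes) :
    ∃ k, C.relIndex (Np p) = (p : ℕ) ^ k :=
  hproq p (C.subgroupOf (Np p)) (subgroupOf_isOpen hC)

lemma card_map_mk (C : Subgroup G) [C.Normal] (B : Subgroup G) :
    Nat.card (B.map (QuotientGroup.mk' C)) = C.relIndex B := by
  have h := Subgroup.relIndex_ker (QuotientGroup.mk' C) (K := B)
  rw [QuotientGroup.ker_mk'] at h
  exact h.symm

end Aux6

section Aux7

variable {G : Type*} [Group G] [TopologicalSpace G] [IsTopologicalGroup G]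
    [CompactSpace G] [T2Space G]
    {Nhat : Subgroup G} {Np : Nat.Primes → Subgroup G}
    (hle : ∀ q, Np q ≤ Nhat)
    (e : ↥Nhat ≃* ∀ q : Nat.Primes, ↥(Np q))

include hle in
/-- Key lemma: if `x` lies in an open subgroup `A` and in `Nhat`, then each of its
components lies in `A`. -/
lemma comp_mem [Nhat.Normal] (hNopen : IsOpen (Nhat : Set G))
    (hnorm : ∀ q, (Np q).Normal)
    (hproq : ∀ q : Nat.Primes, ∀ B : Subgroup (Np q),
      IsOpen (B : Set (Np q)) → ∃ k : ℕ, B.index = (q : ℕ) ^ k)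
    (he : Continuous e) (he' : Continuous e.symm)
    (hcompat : ∀ (q : Nat.Primes) (x : ↥(Np q)),
      e ⟨(x : G), hle q x.2⟩ = Pi.mulSingle q x)
    {A : Subgroup G} (hA : IsOpen (A : Set G)) {x : G} (hxA : x ∈ A) (hxN : x ∈ Nhat)
    (p : Nat.Primes) : ((e ⟨x, hxN⟩ p : ↥(Np p)) : G) ∈ A := by
  classical
  -- the open normal subgroup `C ≤ A`
  set B : Subgroup G := A ⊓ Nhat with hBdef
  have hBopen : IsOpen (B : Set G) := by
    have : (B : Set G) = (A : Set G) ∩ (Nhat : Set G) := rfl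
    rw [this]; exact hA.inter hNopen
  haveI : Finite (G ⧸ B) := Subgroup.quotient_finite_of_isOpen B hBopen
  haveI : B.FiniteIndex := Subgroup.finiteIndex_of_finite_quotient (H := B)
  set C := B.normalCore with hCdef
  haveI : C.FiniteIndex := Subgroup.finiteIndex_normalCore (H := B)
  have hCclosed : IsClosed (C : Set G) :=
    Subgroup.normalCore_isClosed B (B.isClosed_of_isOpen hBopen)
  have hCopen : IsOpen (C : Set G) :=
    Subgroup.isOpen_of_isClosed_of_finiteIndex C hCclosed
  have hCA : C ≤ A := (Subgroup.normalCore_le B).trans inf_le_left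
  haveI : Finite (G ⧸ C) := Subgroup.quotient_finite_of_isOpen C hCopen
  set π : G →* G ⧸ C := QuotientGroup.mk' C with hπdef
  -- decomposition x = u * t
  set n : ↥Nhat := ⟨x, hxN⟩ with hndef
  set u : G := ((e n p : ↥(Np p)) : G) with hudef
  have huNp : u ∈ Np p := (e n p).2
  set uN : ↥Nhat := ⟨u, hle p huNp⟩ with huNdef
  have heu : e uN = Pi.mulSingle p (e n p) := hcompat p (e n p)
  set t : ↥Nhat := uN⁻¹ * n with htdef
  have hnut : x = u * (t : G) := by
    have : uN * t = n := by rw [htdef]; group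
    have hco := congrArg (fun z : ↥Nhat => (z : G)) this
    push_cast at hco
    exact hco.symm
  have hetp : e t p = 1 := by
    rw [htdef, map_mul, map_inv, heu]
    simp
  have hcomm_ut : Commute u (t : G) := comm_of_comp_one hle e hcompat huNp hetp
  -- image subgroups
  set M : Nat.Primes → Subgroup (G ⧸ C) := fun q => (Np q).map π with hMdef
  have hMcard : ∀ q, ∃ k, Nat.card (M q) = (q : ℕ) ^ k := by
    intro q
    rw [hMdef]
    simp only []
    rw [card_map_mk]
    exact relindex_Np_pow hproq hCopen q
  -- order of the image of u is a power of p
  have hub : π u ∈ M p := ⟨u, huNp, rfl⟩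
  have hup : ∃ a, orderOf (π u) = (p : ℕ) ^ a := by
    haveI : Fact (p : ℕ).Prime := ⟨p.2⟩
    obtain ⟨k, hk⟩ := hMcard p
    have hPG : IsPGroup (p : ℕ) (M p) := IsPGroup.of_card hk
    obtain ⟨a, ha⟩ := (IsPGroup.iff_orderOf.mp hPG) ⟨π u, hub⟩
    refine ⟨a, ?_⟩
    rw [← ha, ← Subgroup.orderOf_mk (π u) hub]
  obtain ⟨a, ha⟩ := hup
  -- the image of t lies in the sup of the `M q`, `q ≠ p`
  have hfinM : {q : Nat.Primes | M q ≠ ⊥}.Finite := by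
    have hsub : {q : Nat.Primes | M q ≠ ⊥} ⊆
        (fun q : Nat.Primes => (q : ℕ)) ⁻¹' {m | m ≤ Nat.card (G ⧸ C)} := by
      intro q hq
      obtain ⟨k, hk⟩ := hMcard q
      have hne : Nat.card (M q) ≠ 1 := by
        intro h1
        exact hq (Subgroup.card_eq_one.mp h1)
      have hdvd : Nat.card (M q) ∣ Nat.card (G ⧸ C) := Subgroup.card_subgroup_dvd_card _
      have hq1 : (q : ℕ) ∣ Nat.card (G ⧸ C) := by
        refine dvd_trans ?_ hdvd
        rw [hk]
        rcases Nat.eq_zero_or_pos k with h0 | hpos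
        · exfalso; rw [h0, pow_zero] at hk; exact hne hk
        · exact dvd_pow_self _ hpos.ne'
      have hcard0 : Nat.card (G ⧸ C) ≠ 0 := Nat.card_ne_zero.mpr ⟨⟨1⟩, inferInstance⟩
      exact Nat.le_of_dvd (Nat.pos_of_ne_zero hcard0) hq1
    refine Set.Finite.subset (Set.Finite.preimage ?_ ?_) hsub
    · exact Set.injOn_of_injective (fun a b => Subtype.ext)
    · exact Set.finite_Iic _
  have hfinT : {q : Nat.Primes | M q ≠ ⊥ ∧ q ≠ p}.Finite :=
    hfinM.subset fun q hq => hq.1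
  set T₀ : Finset Nat.Primes := hfinT.toFinset with hT₀def
  have htmem : π (t : G) ∈ T₀.sup M := by
    have hcomap : TP Np {q : Nat.Primes | q ≠ p} ≤ (T₀.sup M).comap π := by
      apply Subgroup.topologicalClosure_minimal
      · refine iSup₂_le fun q hq => ?_
        have h1 : Np q ≤ (M q).comap π := fun z hz => ⟨z, hz, rfl⟩
        refine le_trans h1 (Subgroup.comap_mono ?_)
        by_cases hMq : M q = ⊥
        · rw [hMq]; exact bot_le
        · exact Finset.le_sup (by rw [hT₀def]; exact hfinT.mem_toFinset.mpr ⟨hMq, hq⟩)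
      · have hopen : IsOpen (((T₀.sup M).comap π : Subgroup G) : Set G) := by
          refine Subgroup.isOpen_mono ?_ hCopen
          intro z hz
          have : π z = 1 := by
            rwa [← QuotientGroup.ker_mk' C, MonoidHom.mem_ker] at hz
          show π z ∈ T₀.sup M
          rw [this]; exact Subgroup.one_mem _
        exact Subgroup.isClosed_of_isOpen _ hopen
    have htTP : (t : G) ∈ TP Np {q : Nat.Primes | q ≠ p} := by
      rw [mem_TP_iff hle e hNopen he he' hcompat]
      refine ⟨t.2, fun q hq => ?_⟩
      have hqp : q = p := by simpa using hq
      subst hqp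
      rw [Subtype.coe_eta]
      exact hetp
    exact hcomap htTP
  -- the order of the image of t is coprime to p
  have hordt : ¬ (p : ℕ) ∣ orderOf (π (t : G)) := by
    refine order_coprime_finsetsup p.2 M
      (fun q => (hnorm q).map π (QuotientGroup.mk'_surjective C))
      (fun q q' hqq' z hz w hw => ?_)
      (fun q z hz hqp hdvd => ?_) T₀ (fun q hq => ?_) (π (t : G)) htmem
    · obtain ⟨z₀, hz₀, rfl⟩ := hz
      obtain ⟨w₀, hw₀, rfl⟩ := hw
      exact (comm_of_ne hle e hcompat hqq' hz₀ hw₀).map π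
    · -- orderOf z divides q^k
      obtain ⟨k, hk⟩ := hMcard q
      have hzord : orderOf z ∣ (q : ℕ) ^ k := by
        rw [← hk]
        rw [← Subgroup.orderOf_mk z hz]
        exact orderOf_dvd_natCard _
      have hpq : (p : ℕ) ∣ (q : ℕ) ^ k := hdvd.trans hzord
      have := (Nat.prime_dvd_prime_iff_eq p.2 q.2).mp (p.2.dvd_of_dvd_pow hpq)
      exact hqp this.symm
    · have := (hfinT.mem_toFinset.mp (by rwa [hT₀def] at hq)).2
      exact fun h => this (Subtype.ext h)
  -- CRT
  have hcop : Nat.Coprime ((p : ℕ) ^ a) (orderOf (π (t : G))) :=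
    Nat.Coprime.pow_left a ((Nat.Prime.coprime_iff_not_dvd p.2).mpr hordt)
  obtain ⟨k, hk1, hk2⟩ := Nat.chineseRemainder hcop 1 0
  have hπx : π x = π u * π (t : G) := by rw [hnut, map_mul]
  have hcommπ : Commute (π u) (π (t : G)) := hcomm_ut.map π
  have hxk : (π x) ^ k = (π u) ^ k * (π (t : G)) ^ k := by
    rw [hπx]
    exact hcommπ.mul_pow k
  have htk : (π (t : G)) ^ k = 1 := by
    apply orderOf_dvd_iff_pow_eq_one.mp
    exact Nat.modEq_zero_iff_dvd.mp hk2
  have huk : (π u) ^ k = π u := by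
    have : (π u) ^ k = (π u) ^ 1 := by
      rw [pow_eq_pow_iff_modEq, ha]
      exact hk1
    rwa [pow_one] at this
  have hueq : π u = π (x ^ k) := by
    rw [map_pow, hxk, htk, huk, mul_one]
  -- conclude
  have : u⁻¹ * x ^ k ∈ C := by
    rw [← QuotientGroup.ker_mk' C, MonoidHom.mem_ker]
    show π (u⁻¹ * x ^ k) = 1
    rw [map_mul, map_inv, ← hueq]
    simp
  have hxkA : x ^ k ∈ A := pow_mem hxA k
  have huA : u ∈ A := by
    have h2 : u * (u⁻¹ * x ^ k) = x ^ k := by group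
    have := mul_mem (hCA this) (inv_mem hxkA)
    have h3 : (u⁻¹ * x ^ k) * (x ^ k)⁻¹ = u⁻¹ := by group
    rw [h3] at this
    exact (inv_mem_iff).mp this
  exact huA

end Aux7

section Aux8

variable {G : Type*} [Group G] [TopologicalSpace G] [IsTopologicalGroup G]
    [CompactSpace G] [T2Space G]
    {Nhat : Subgroup G} {Np : Nat.Primes → Subgroup G}
    (hle : ∀ q, Np q ≤ Nhat)
    (e : ↥Nhat ≃* ∀ q : Nat.Primes, ↥(Np q))

include hle in
lemma comp_split (hcompat : ∀ (q : Nat.Primes) (x : ↥(Np q)),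
      e ⟨(x : G), hle q x.2⟩ = Pi.mulSingle q x)
    {x : G} (hx : x ∈ Nhat) (p : Nat.Primes) :
    ∃ (t : ↥Nhat), x = ((e ⟨x, hx⟩ p : ↥(Np p)) : G) * (t : G) ∧ e t p = 1 ∧
      ∀ q, q ≠ p → e t q = e ⟨x, hx⟩ q := by
  set n : ↥Nhat := ⟨x, hx⟩ with hndef
  set u : G := ((e n p : ↥(Np p)) : G) with hudef
  have huNp : u ∈ Np p := (e n p).2
  set uN : ↥Nhat := ⟨u, hle p huNp⟩ with huNdef
  have heu : e uN = Pi.mulSingle p (e n p) := hcompat p (e n p)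
  refine ⟨uN⁻¹ * n, ?_, ?_, ?_⟩
  · have hco : ((uN⁻¹ * n : ↥Nhat) : G) = u⁻¹ * x := by push_cast; rfl
    rw [hco]
    group
  · rw [map_mul, map_inv, heu]; simp
  · intro q hq
    rw [map_mul, map_inv, heu]
    simp [Pi.mulSingle_apply, hq]

include hle in
lemma TP_univ (hNopen : IsOpen (Nhat : Set G))
    (he : Continuous e) (he' : Continuous e.symm)
    (hcompat : ∀ (q : Nat.Primes) (x : ↥(Np q)),
      e ⟨(x : G), hle q x.2⟩ = Pi.mulSingle q x) :
    TP Np (Set.univ : Set Nat.Primes) = Nhat := by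
  apply le_antisymm (TP_le_Nhat hle hNopen _)
  intro x hx
  exact (mem_TP_iff hle e hNopen he he' hcompat).mpr
    ⟨hx, fun q hq => absurd (Set.mem_univ q) hq⟩

include hle in
lemma TP_le_TP_sup (hNopen : IsOpen (Nhat : Set G))
    (he : Continuous e) (he' : Continuous e.symm)
    (hcompat : ∀ (q : Nat.Primes) (x : ↥(Np q)),
      e ⟨(x : G), hle q x.2⟩ = Pi.mulSingle q x)
    {P P' : Set Nat.Primes} {p : Nat.Primes}
    (h : ∀ q, q ∈ P → q ≠ p → q ∈ P') :
    TP Np P ≤ TP Np P' ⊔ Np p := by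
  intro x hx
  obtain ⟨hxN, hxcomp⟩ := (mem_TP_iff hle e hNopen he he' hcompat).mp hx
  obtain ⟨t, hxsplit, htp, htq⟩ := comp_split hle e hcompat hxN p
  have htTP : (t : G) ∈ TP Np P' := by
    rw [mem_TP_iff hle e hNopen he he' hcompat]
    refine ⟨t.2, fun q hq => ?_⟩
    rw [Subtype.coe_eta]
    by_cases hqp : q = p
    · subst hqp; exact htp
    · rw [htq q hqp]
      by_cases hqP : q ∈ P
      · exact absurd (h q hqP hqp) hq
      · exact hxcomp q hqP
  rw [hxsplit]
  exact mul_mem ((le_sup_right : Np p ≤ TP Np P' ⊔ Np p) ((e ⟨x, hxN⟩ p).2))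
    ((le_sup_left : TP Np P' ≤ TP Np P' ⊔ Np p) htTP)

include hle in
lemma Y_inf_Np [Nhat.Normal] (hNopen : IsOpen (Nhat : Set G))
    (hnorm : ∀ q, (Np q).Normal)
    (hproq : ∀ q : Nat.Primes, ∀ B : Subgroup (Np q),
      IsOpen (B : Set (Np q)) → ∃ k : ℕ, B.index = (q : ℕ) ^ k)
    (he : Continuous e) (he' : Continuous e.symm)
    (hcompat : ∀ (q : Nat.Primes) (x : ↥(Np q)),
      e ⟨(x : G), hle q x.2⟩ = Pi.mulSingle q x)
    {A : Subgroup G} (hA : IsOpen (A : Set G))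
    {P : Set Nat.Primes} {p : Nat.Primes} (hp : p ∉ P) :
    (A ⊔ TP Np P) ⊓ Np p = A ⊓ Np p := by
  apply le_antisymm
  · intro x hx
    obtain ⟨hx1, hx2⟩ := Subgroup.mem_inf.mp hx
    haveI : (TP Np P).Normal := TP_normal hnorm P
    have hxset : x ∈ (A : Set G) * (TP Np P : Set G) := by
      rw [← Subgroup.mul_normal]
      exact SetLike.mem_coe.mpr hx1
    obtain ⟨a, haA, s, hsT, hxas⟩ := hxset
    obtain ⟨hsN, hscomp⟩ := (mem_TP_iff hle e hNopen he he' hcompat).mp hsT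
    have hxN : x ∈ Nhat := hle p hx2
    have haN : a ∈ Nhat := by
      have : a = x * s⁻¹ := by rw [← hxas]; group
      rw [this]
      exact mul_mem hxN (inv_mem hsN)
    have hcompa : ((e ⟨a, haN⟩ p : ↥(Np p)) : G) ∈ A :=
      comp_mem hle e hNopen hnorm hproq he he' hcompat hA haA haN p
    have haeq : (⟨a, haN⟩ : ↥Nhat) = ⟨x, hxN⟩ * (⟨s, hsN⟩ : ↥Nhat)⁻¹ := by
      apply Subtype.ext
      push_cast
      rw [← hxas]; group
    have hcomp_eq : ((e ⟨a, haN⟩ p : ↥(Np p)) : G) = x := by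
      rw [haeq, map_mul, map_inv]
      have h1 : e ⟨x, hxN⟩ p = ⟨x, hx2⟩ := by
        have := hcompat p ⟨x, hx2⟩
        rw [this]  -- careful: e ⟨↑⟨x,hx2⟩, _⟩ = mulSingle p ⟨x,hx2⟩...
        simp
      have h2 : e ⟨s, hsN⟩ p = 1 := hscomp p hp
      show (((e ⟨x, hxN⟩ * (e ⟨s, hsN⟩)⁻¹) p : ↥(Np p)) : G) = x
      rw [Pi.mul_apply, Pi.inv_apply, h1, h2]
      simp
    rw [hcomp_eq] at hcompa
    exact ⟨hcompa, hx2⟩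
  · exact inf_le_inf_right _ le_sup_left

end Aux8

section Aux9

variable {G : Type*} [Group G] [TopologicalSpace G] [IsTopologicalGroup G]
    [CompactSpace G] [T2Space G]
    {Nhat : Subgroup G} {Np : Nat.Primes → Subgroup G}
    (hle : ∀ q, Np q ≤ Nhat)
    (e : ↥Nhat ≃* ∀ q : Nat.Primes, ↥(Np q))

include hle in
/-- if `[H0 : A ⊔ Np p ⊔ ⋯] = relindex` identification for `Y = A ⊔ TP P`, `p ∉ P`,
`Y ⊔ Np p = X`. -/
lemma relindex_Y_X [Nhat.Normal] (hNopen : IsOpen (Nhat : Set G))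
    (hnorm : ∀ q, (Np q).Normal)
    (hproq : ∀ q : Nat.Primes, ∀ B : Subgroup (Np q),
      IsOpen (B : Set (Np q)) → ∃ k : ℕ, B.index = (q : ℕ) ^ k)
    (he : Continuous e) (he' : Continuous e.symm)
    (hcompat : ∀ (q : Nat.Primes) (x : ↥(Np q)),
      e ⟨(x : G), hle q x.2⟩ = Pi.mulSingle q x)
    {A : Subgroup G} (hA : IsOpen (A : Set G))
    {P : Set Nat.Primes} {p : Nat.Primes} (hp : p ∉ P) :
    (A ⊔ TP Np P).relIndex ((A ⊔ TP Np P) ⊔ Np p) = (A ⊓ Np p).relIndex (Np p) := by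
  haveI := hnorm p
  rw [relindex_sup_eq (Np p) (A ⊔ TP Np P)]
  rw [Y_inf_Np hle e hNopen hnorm hproq he he' hcompat hA hp]

include hle in
lemma chain_relindex [Nhat.Normal] (hNopen : IsOpen (Nhat : Set G))
    (hnorm : ∀ q, (Np q).Normal)
    (hproq : ∀ q : Nat.Primes, ∀ B : Subgroup (Np q),
      IsOpen (B : Set (Np q)) → ∃ k : ℕ, B.index = (q : ℕ) ^ k)
    (he : Continuous e) (he' : Continuous e.symm)
    (hcompat : ∀ (q : Nat.Primes) (x : ↥(Np q)),
      e ⟨(x : G), hle q x.2⟩ = Pi.mulSingle q x)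
    {A H0 : Subgroup G} (hA : IsOpen (A : Set G)) (hAH : A ⊔ Nhat = H0)
    (S : Finset Nat.Primes) :
    (A ⊔ TP Np {q | q ∉ S}).relIndex H0 =
      ∏ p ∈ S, (A ⊓ Np p).relIndex (Np p) := by
  classical
  induction S using Finset.induction_on with
  | empty =>
    have h1 : {q : Nat.Primes | q ∉ (∅ : Finset Nat.Primes)} = Set.univ := by
      ext q; simp
    rw [h1, TP_univ hle e hNopen he he' hcompat, hAH]
    simp [Subgroup.relIndex_self]
  | @insert p S hp IH =>
    set Y' := A ⊔ TP Np {q | q ∉ insert p S} with hY'def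
    set Y := A ⊔ TP Np {q | q ∉ S} with hYdef
    have hpmem : p ∈ {q : Nat.Primes | q ∉ S} := by simpa using hp
    have hsubset : {q : Nat.Primes | q ∉ insert p S} ⊆ {q | q ∉ S} := by
      intro q hq
      simp only [Set.mem_setOf_eq] at hq ⊢
      exact fun hqS => hq (Finset.mem_insert_of_mem hqS)
    have hY'leY : Y' ≤ Y := sup_le le_sup_left (le_trans (TP_mono hsubset) le_sup_right)
    have hYY' : Y = Y' ⊔ Np p := by
      apply le_antisymm
      · refine sup_le (le_trans le_sup_left le_sup_left) ?_
        refine le_trans (TP_le_TP_sup hle e hNopen he he' hcompat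
          (P' := {q | q ∉ insert p S}) (p := p) ?_) ?_
        · intro q hq hqp
          simp only [Set.mem_setOf_eq] at hq ⊢
          intro hmem
          rcases Finset.mem_insert.mp hmem with h | h
          · exact hqp h
          · exact hq h
        · exact sup_le (le_trans le_sup_right le_sup_left) le_sup_right
      · refine sup_le hY'leY ?_
        exact le_trans (Np_le_TP hpmem) le_sup_right
    have hpnot : p ∉ {q : Nat.Primes | q ∉ insert p S} := by simp
    have h1 : Y'.relIndex Y = (A ⊓ Np p).relIndex (Np p) := by
      rw [hYY']
      exact relindex_Y_X hle e hNopen hnorm hproq he he' hcompat hA hpnot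
    have hYH : Y ≤ H0 := by
      rw [← hAH]
      exact sup_le le_sup_left (le_trans (TP_le_Nhat hle hNopen _) le_sup_right)
    rw [Finset.prod_insert hp, ← IH, ← h1]
    exact (Subgroup.relIndex_mul_relIndex Y' Y H0 hY'leY hYH).symm

include hle in
lemma Np_le_of_relindex_pow (hnorm : ∀ q, (Np q).Normal)
    (hproq : ∀ q : Nat.Primes, ∀ B : Subgroup (Np q),
      IsOpen (B : Set (Np q)) → ∃ k : ℕ, B.index = (q : ℕ) ^ k)
    {D H0 : Subgroup G} (hD : IsOpen (D : Set G)) (hDH : D ≤ H0) (hNH : Nhat ≤ H0)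
    {p : Nat.Primes} {k : ℕ} (hrel : D.relIndex H0 = (p : ℕ) ^ k)
    {q : Nat.Primes} (hq : q ≠ p) : Np q ≤ D := by
  haveI := hnorm q
  obtain ⟨m, hm⟩ := relindex_Np_pow hproq hD q
  have h1 : D.relIndex (D ⊔ Np q) = (D ⊓ Np q).relIndex (Np q) := relindex_sup_eq (Np q) D
  have h2 : D.relIndex (D ⊔ Np q) * (D ⊔ Np q).relIndex H0 = D.relIndex H0 :=
    Subgroup.relIndex_mul_relIndex _ _ _ le_sup_left (sup_le hDH ((hle q).trans hNH))
  have h3 : (D ⊓ Np q).relIndex (Np q) = D.relIndex (Np q) := Subgroup.inf_relIndex_right D (Np q)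
  have hdvd : (q : ℕ) ^ m ∣ (p : ℕ) ^ k := by
    refine ⟨(D ⊔ Np q).relIndex H0, ?_⟩
    rw [← hrel, ← h2, h1, h3, hm]
  rcases Nat.eq_zero_or_pos m with h0 | hpos
  · have : D.relIndex (Np q) = 1 := by rw [hm, h0, pow_zero]
    exact Subgroup.relIndex_eq_one.mp this
  · exfalso
    have hqk : (q : ℕ) ∣ (p : ℕ) ^ k := dvd_trans (dvd_pow_self _ hpos.ne') hdvd
    have := (Nat.prime_dvd_prime_iff_eq q.2 p.2).mp (q.2.dvd_of_dvd_pow hqk)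
    exact hq (Subtype.ext this)

lemma finset_inf_isOpen (S : Finset Nat.Primes) (Ap : Nat.Primes → Subgroup G)
    (hAp : ∀ p ∈ S, IsOpen ((Ap p : Set G))) :
    IsOpen ((S.inf Ap : Subgroup G) : Set G) := by
  classical
  induction S using Finset.induction_on with
  | empty => simp
  | @insert p S hp IH =>
    rw [Finset.inf_insert]
    have h1 : ((Ap p ⊓ S.inf Ap : Subgroup G) : Set G) =
        (Ap p : Set G) ∩ ((S.inf Ap : Subgroup G) : Set G) := rfl
    rw [h1]
    exact (hAp p (Finset.mem_insert_self _ _)).inter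
      (IH fun q hq => hAp q (Finset.mem_insert_of_mem hq))

end Aux9


/-- In the profinite Sylow-product setup, the map `A ↦ (A·T_p)_p` is a bijection
from the open subgroups `A` of `Ĝ` with `π(A) = K` onto the tuples `(A_p)_p` of
open subgroups with `π(A_p) = K`, `[π⁻¹(K) : A_p]` a power of `p`, and
`A_p = π⁻¹(K)` for all but finitely many `p`; moreover
`[π⁻¹(K) : A] = ∏_p [π⁻¹(K) : A·T_p]`. -/
theorem stmt7 {G : Type*} [Group G] [TopologicalSpace G] [IsTopologicalGroup G]
    [CompactSpace G] [TotallyDisconnectedSpace G] [T2Space G]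
    (Nhat : Subgroup G) [Nhat.Normal] (hNopen : IsOpen (Nhat : Set G))
    (Np : Nat.Primes → Subgroup G) (hle : ∀ q, Np q ≤ Nhat)
    (hnorm : ∀ q, (Np q).Normal)
    (hproq : ∀ q : Nat.Primes, ∀ B : Subgroup (Np q),
      IsOpen (B : Set (Np q)) → ∃ k : ℕ, B.index = (q : ℕ) ^ k)
    (e : ↥Nhat ≃* ∀ q : Nat.Primes, ↥(Np q))
    (he : Continuous e) (he' : Continuous e.symm)
    (hcompat : ∀ (q : Nat.Primes) (x : ↥(Np q)),
      e ⟨(x : G), hle q x.2⟩ = Pi.mulSingle q x)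
    (Tp : Nat.Primes → Subgroup G)
    (hTp : ∀ p : Nat.Primes, ((Tp p : Set G)) =
      closure ((⨆ q ∈ {q : Nat.Primes | q ≠ p}, Np q : Subgroup G) : Set G))
    (K : Subgroup (G ⧸ Nhat)) :
    Set.BijOn (fun (A : Subgroup G) => fun p : Nat.Primes => A ⊔ Tp p)
        {A : Subgroup G | IsOpen (A : Set G) ∧
          A.map (QuotientGroup.mk' Nhat) = K}
        {Ap : Nat.Primes → Subgroup G |
          (∀ p, IsOpen ((Ap p : Set G)) ∧
            (Ap p).map (QuotientGroup.mk' Nhat) = K ∧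
            ∃ k : ℕ, (Ap p).relIndex (K.comap (QuotientGroup.mk' Nhat)) =
              (p : ℕ) ^ k) ∧
          ∀ᶠ p : Nat.Primes in Filter.cofinite,
            Ap p = K.comap (QuotientGroup.mk' Nhat)} ∧
      ∀ A : Subgroup G, IsOpen (A : Set G) →
        A.map (QuotientGroup.mk' Nhat) = K →
        A.relIndex (K.comap (QuotientGroup.mk' Nhat)) =
          ∏ᶠ p : Nat.Primes,
            (A ⊔ Tp p).relIndex (K.comap (QuotientGroup.mk' Nhat)) := by
  classical
  set H0 : Subgroup G := K.comap (QuotientGroup.mk' Nhat) with hH0def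
  have hNhatH0 : Nhat ≤ H0 := by
    intro x hx
    show (QuotientGroup.mk' Nhat) x ∈ K
    have h1 : (QuotientGroup.mk' Nhat) x = 1 := by
      rwa [← MonoidHom.mem_ker, QuotientGroup.ker_mk']
    rw [h1]
    exact K.one_mem
  have hH0open : IsOpen (H0 : Set G) := Subgroup.isOpen_mono hNhatH0 hNopen
  have hTpTP : ∀ p, Tp p = TP Np {q : Nat.Primes | q ≠ p} := by
    intro p
    apply SetLike.coe_injective
    show (Tp p : Set G) = ((⨆ q ∈ {q : Nat.Primes | q ≠ p}, Np q).topologicalClosure : Set G)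
    rw [Subgroup.topologicalClosure_coe]
    exact hTp p
  have hTpNhat : ∀ p, Tp p ≤ Nhat := by
    intro p
    rw [hTpTP p]
    exact TP_le_Nhat hle hNopen _
  have hAH : ∀ {A : Subgroup G}, A.map (QuotientGroup.mk' Nhat) = K → A ⊔ Nhat = H0 := by
    intro A hmap
    rw [hH0def, ← hmap, Subgroup.comap_map_eq, QuotientGroup.ker_mk']
  have hAleH0 : ∀ {A : Subgroup G}, A.map (QuotientGroup.mk' Nhat) = K → A ≤ H0 := by
    intro A hmap
    rw [← hAH hmap]
    exact le_sup_left
  have hNhat_le_TP_Np : ∀ p, Nhat ≤ TP Np {q : Nat.Primes | q ≠ p} ⊔ Np p := by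
    intro p
    rw [← TP_univ hle e hNopen he he' hcompat]
    exact TP_le_TP_sup hle e hNopen he he' hcompat (fun q _ hq => hq)
  have hd : ∀ {A : Subgroup G}, IsOpen (A : Set G) →
      A.map (QuotientGroup.mk' Nhat) = K →
      ∀ p, (A ⊔ Tp p).relIndex H0 = (A ⊓ Np p).relIndex (Np p) := by
    intro A hA hmap p
    rw [hTpTP p]
    have hX : (A ⊔ TP Np {q : Nat.Primes | q ≠ p}) ⊔ Np p = H0 := by
      apply le_antisymm
      · exact sup_le (sup_le (hAleH0 hmap)
          (le_trans (TP_le_Nhat hle hNopen _) hNhatH0)) ((hle p).trans hNhatH0)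
      · rw [← hAH hmap]
        refine sup_le (le_trans le_sup_left le_sup_left) ?_
        exact le_trans (hNhat_le_TP_Np p)
          (sup_le (le_trans le_sup_right le_sup_left) le_sup_right)
    conv_lhs => rw [← hX]
    exact relindex_Y_X hle e hNopen hnorm hproq he he' hcompat hA (by simp)
  have hpow : ∀ {A : Subgroup G}, IsOpen (A : Set G) →
      ∀ p, ∃ k, (A ⊓ Np p).relIndex (Np p) = (p : ℕ) ^ k := by
    intro A hA p
    obtain ⟨k, hk⟩ := relindex_Np_pow hproq hA p
    exact ⟨k, by rw [Subgroup.inf_relIndex_right]; exact hk⟩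
  have hEv : ∀ {A : Subgroup G}, IsOpen (A : Set G) →
      A.map (QuotientGroup.mk' Nhat) = K →
      ∀ {S : Finset Nat.Primes}, TP Np {q | q ∉ S} ≤ A →
      ∀ p, p ∉ S → A ⊔ Tp p = H0 := by
    intro A hA hmap S hS p hpS
    apply le_antisymm
    · exact sup_le (hAleH0 hmap) ((hTpNhat p).trans hNhatH0)
    · rw [← hAH hmap]
      refine sup_le le_sup_left ?_
      refine le_trans (hNhat_le_TP_Np p) (sup_le ?_ ?_)
      · rw [← hTpTP p]; exact le_sup_right
      · refine le_trans ?_ le_sup_left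
        exact le_trans (Np_le_TP (by simpa using hpS)) hS
  have hprod : ∀ (A : Subgroup G), IsOpen (A : Set G) →
      A.map (QuotientGroup.mk' Nhat) = K →
      A.relIndex H0 = ∏ᶠ p : Nat.Primes, (A ⊔ Tp p).relIndex H0 := by
    intro A hA hmap
    obtain ⟨S, hS⟩ := exists_finset_TP_le hle e hNopen he he' hcompat hA
    have hASup : A ⊔ TP Np {q | q ∉ S} = A := sup_eq_left.mpr hS
    have hchain := chain_relindex hle e hNopen hnorm hproq he he' hcompat hA (hAH hmap) S
    rw [hASup] at hchain
    have hsupp : (Function.mulSupport fun p => (A ⊔ Tp p).relIndex H0) ⊆ (S : Set Nat.Primes) := by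
      intro p hp
      by_contra hpS
      apply hp
      show (A ⊔ Tp p).relIndex H0 = 1
      rw [hEv hA hmap hS p (by simpa using hpS)]
      exact Subgroup.relIndex_self H0
    calc A.relIndex H0 = ∏ p ∈ S, (A ⊓ Np p).relIndex (Np p) := hchain
      _ = ∏ p ∈ S, (A ⊔ Tp p).relIndex H0 :=
          Finset.prod_congr rfl (fun p _ => (hd hA hmap p).symm)
      _ = ∏ᶠ p : Nat.Primes, (A ⊔ Tp p).relIndex H0 :=
          (finprod_eq_prod_of_mulSupport_subset _ hsupp).symm
  refine ⟨⟨?_, ?_, ?_⟩, hprod⟩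
  · -- MapsTo
    rintro A ⟨hA, hmap⟩
    refine ⟨fun p => ⟨Subgroup.isOpen_mono le_sup_left hA, ?_, ?_⟩, ?_⟩
    · rw [Subgroup.map_sup, hmap]
      have hbot : (Tp p).map (QuotientGroup.mk' Nhat) = ⊥ := by
        rw [eq_bot_iff]
        rw [Subgroup.map_le_iff_le_comap]
        intro z hz
        show (QuotientGroup.mk' Nhat) z ∈ (⊥ : Subgroup (G ⧸ Nhat))
        rw [Subgroup.mem_bot, ← MonoidHom.mem_ker, QuotientGroup.ker_mk']
        exact hTpNhat p hz
      rw [hbot, sup_bot_eq]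
    · obtain ⟨k, hk⟩ := hpow hA p
      exact ⟨k, by rw [hd hA hmap p]; exact hk⟩
    · obtain ⟨S, hS⟩ := exists_finset_TP_le hle e hNopen he he' hcompat hA
      rw [Filter.eventually_cofinite]
      refine Set.Finite.subset S.finite_toSet ?_
      intro p hp
      by_contra hpS
      exact hp (hEv hA hmap hS p (by simpa using hpS))
  · -- InjOn
    have key : ∀ (B B' : Subgroup G), IsOpen (B : Set G) → IsOpen (B' : Set G) →
        B.map (QuotientGroup.mk' Nhat) = K → B'.map (QuotientGroup.mk' Nhat) = K →
        (∀ p, B ⊔ Tp p = B' ⊔ Tp p) → B ≤ B' := by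
      intro B B' hB hB' hmapB hmapB' hBB' x hxB
      have hmem : (QuotientGroup.mk' Nhat) x ∈ B'.map (QuotientGroup.mk' Nhat) := by
        rw [hmapB', ← hmapB]
        exact ⟨x, hxB, rfl⟩
      obtain ⟨a', ha'B, ha'eq⟩ := hmem
      have htN : a'⁻¹ * x ∈ Nhat := by
        rw [← QuotientGroup.ker_mk' Nhat, MonoidHom.mem_ker, map_mul, map_inv, ha'eq]
        simp
      set t : G := a'⁻¹ * x with htdef
      have htsup : ∀ p, t ∈ B' ⊔ Tp p := by
        intro p
        have hx2 : x ∈ B' ⊔ Tp p := by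
          rw [← hBB' p]
          exact (le_sup_left : B ≤ B ⊔ Tp p) hxB
        exact mul_mem ((le_sup_left : B' ≤ B' ⊔ Tp p) (inv_mem ha'B)) hx2
      have hcompt : ∀ q, ((e ⟨t, htN⟩ q : ↥(Np q)) : G) ∈ B' := by
        intro q
        have ht2 := htsup q
        rw [hTpTP q] at ht2
        haveI : (TP Np {r : Nat.Primes | r ≠ q}).Normal := TP_normal hnorm _
        have htset : t ∈ (B' : Set G) * (TP Np {r : Nat.Primes | r ≠ q} : Set G) := by
          rw [← Subgroup.mul_normal]
          exact SetLike.mem_coe.mpr ht2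
        obtain ⟨b, hbB, s, hsT, hbst⟩ := htset
        obtain ⟨hsN, hscomp⟩ := (mem_TP_iff hle e hNopen he he' hcompat).mp hsT
        have hbN : b ∈ Nhat := by
          have hb : b = t * s⁻¹ := by rw [← hbst]; group
          rw [hb]
          exact mul_mem htN (inv_mem hsN)
        have hbmem := comp_mem hle e hNopen hnorm hproq he he' hcompat hB' hbB hbN q
        have hteq : (⟨t, htN⟩ : ↥Nhat) = ⟨b, hbN⟩ * ⟨s, hsN⟩ := by
          apply Subtype.ext
          push_cast
          exact hbst.symm
        have hte : e ⟨t, htN⟩ q = e ⟨b, hbN⟩ q := by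
          rw [hteq, map_mul, Pi.mul_apply, hscomp q (by simp), mul_one]
        rw [hte]
        exact hbmem
      obtain ⟨S', hS'⟩ := exists_finset_TP_le hle e hNopen he he' hcompat hB'
      obtain ⟨r, hr1, hr2, hr3⟩ := split_finset hle e hcompat S' ⟨t, htN⟩
      have hgens : (fun q => ((e ⟨t, htN⟩ q : ↥(Np q)) : G)) '' (S' : Set Nat.Primes) ⊆
          (B' : Set G) := by
        rintro z ⟨q, hq, rfl⟩
        exact hcompt q
      have hclB' : t * (r : G)⁻¹ ∈ B' := (Subgroup.closure_le B').mpr hgens hr3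
      have hrB' : (r : G) ∈ B' := by
        apply hS'
        rw [mem_TP_iff hle e hNopen he he' hcompat]
        refine ⟨r.2, fun q hq => ?_⟩
        rw [Subtype.coe_eta]
        exact hr1 q (by simpa using hq)
      have htB' : t ∈ B' := by
        have ht3 : t = (t * (r : G)⁻¹) * r := by group
        rw [ht3]
        exact mul_mem hclB' hrB'
      have hx3 : x = a' * t := by rw [htdef]; group
      rw [hx3]
      exact mul_mem ha'B htB'
    rintro A ⟨hA, hmap⟩ A' ⟨hA', hmap'⟩ hfeq
    have h1 : ∀ p, A ⊔ Tp p = A' ⊔ Tp p := fun p => congrFun hfeq p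
    exact le_antisymm (key A A' hA hA' hmap hmap' h1)
      (key A' A hA' hA hmap' hmap (fun p => (h1 p).symm))
  · -- SurjOn
    rintro Ap ⟨hAp1, hAp2⟩
    have hApH0 : ∀ p, Ap p ≤ H0 := by
      intro p
      have hm := (hAp1 p).2.1
      rw [hH0def, ← hm]
      exact Subgroup.le_comap_map _ _
    have hNple : ∀ p q, q ≠ p → Np q ≤ Ap p := by
      intro p q hq
      obtain ⟨k, hk⟩ := (hAp1 p).2.2
      exact Np_le_of_relindex_pow hle hnorm hproq (hAp1 p).1 (hApH0 p) hNhatH0 hk hq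
    have hTple : ∀ p, Tp p ≤ Ap p := by
      intro p
      rw [hTpTP p]
      apply Subgroup.topologicalClosure_minimal
      · exact iSup₂_le fun q hq => hNple p q hq
      · exact Subgroup.isClosed_of_isOpen _ (hAp1 p).1
    have hfinS : {p : Nat.Primes | Ap p ≠ H0}.Finite := Filter.eventually_cofinite.mp hAp2
    set S₁ : Finset Nat.Primes := hfinS.toFinset with hS₁def
    set A : Subgroup G := ⨅ p, Ap p with hAdef
    have hAle : ∀ p, A ≤ Ap p := fun p => iInf_le Ap p
    have hAeq : A = (S₁.inf Ap) ⊓ H0 := by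
      apply le_antisymm
      · exact le_inf (Finset.le_inf fun p _ => iInf_le Ap p)
          (le_trans (iInf_le Ap ⟨2, Nat.prime_two⟩) (hApH0 _))
      · intro z hz
        obtain ⟨hz1, hz2⟩ := Subgroup.mem_inf.mp hz
        rw [hAdef, Subgroup.mem_iInf]
        intro p
        by_cases hpS : p ∈ S₁
        · exact (Finset.inf_le hpS : S₁.inf Ap ≤ Ap p) hz1
        · have hEq : Ap p = H0 := by
            by_contra hne
            exact hpS (by rw [hS₁def]; exact hfinS.mem_toFinset.mpr hne)
          rw [hEq]
          exact hz2
    have hAopen : IsOpen (A : Set G) := by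
      rw [hAeq]
      have h1 : ((S₁.inf Ap ⊓ H0 : Subgroup G) : Set G) =
          ((S₁.inf Ap : Subgroup G) : Set G) ∩ (H0 : Set G) := rfl
      rw [h1]
      exact (finset_inf_isOpen S₁ Ap (fun p _ => (hAp1 p).1)).inter hH0open
    have hmapA : A.map (QuotientGroup.mk' Nhat) = K := by
      apply le_antisymm
      · rw [← (hAp1 ⟨2, Nat.prime_two⟩).2.1]
        exact Subgroup.map_mono (hAle _)
      · intro kk hkk
        obtain ⟨h, hheq⟩ := QuotientGroup.mk'_surjective Nhat kk
        have hsel : ∀ p, ∃ apv : G, apv ∈ Ap p ∧ (apv⁻¹ * h) ∈ Nhat := by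
          intro p
          have hkk2 : kk ∈ (Ap p).map (QuotientGroup.mk' Nhat) := by
            rw [(hAp1 p).2.1]
            exact hkk
          obtain ⟨apv, hap, hapeq⟩ := hkk2
          refine ⟨apv, hap, ?_⟩
          rw [← QuotientGroup.ker_mk' Nhat, MonoidHom.mem_ker, map_mul, map_inv, hapeq, hheq]
          simp
        choose apv hap hmp using hsel
        set c : ↥Nhat := e.symm (fun p => e ⟨(apv p)⁻¹ * h, hmp p⟩ p) with hcdef
        set y : G := h * (c : G)⁻¹ with hydef
        have hyA : y ∈ A := by
          rw [hAdef, Subgroup.mem_iInf]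
          intro p
          have hsplit : y = apv p * (((apv p)⁻¹ * h) * (c : G)⁻¹) := by
            rw [hydef]; group
          have hmem2 : ((apv p)⁻¹ * h) * (c : G)⁻¹ ∈ Nhat :=
            mul_mem (hmp p) (inv_mem c.2)
          have hmc : ((apv p)⁻¹ * h) * (c : G)⁻¹ ∈ Tp p := by
            rw [hTpTP p, mem_TP_iff hle e hNopen he he' hcompat]
            refine ⟨hmem2, fun q hq => ?_⟩
            have hqp : q = p := by simpa using hq
            subst hqp
            have heq2 : (⟨((apv q)⁻¹ * h) * (c : G)⁻¹, hmem2⟩ : ↥Nhat) =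
                ⟨(apv q)⁻¹ * h, hmp q⟩ * c⁻¹ := by
              apply Subtype.ext
              push_cast
              rfl
            rw [heq2, map_mul, map_inv, Pi.mul_apply, Pi.inv_apply]
            rw [hcdef, MulEquiv.apply_symm_apply]
            simp
          rw [hsplit]
          exact mul_mem (hap p) (hTple p hmc)
        refine ⟨y, hyA, ?_⟩
        show (QuotientGroup.mk' Nhat) y = kk
        have hc1 : (QuotientGroup.mk' Nhat) (c : G) = 1 := by
          rw [← MonoidHom.mem_ker, QuotientGroup.ker_mk']
          exact c.2
        rw [hydef, map_mul, map_inv, hc1, hheq]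
        simp
    refine ⟨A, ⟨hAopen, hmapA⟩, ?_⟩
    funext p
    show A ⊔ Tp p = Ap p
    apply le_antisymm
    · exact sup_le (hAle p) (hTple p)
    · intro x hx
      have hπx : (QuotientGroup.mk' Nhat) x ∈ A.map (QuotientGroup.mk' Nhat) := by
        rw [hmapA, ← (hAp1 p).2.1]
        exact ⟨x, hx, rfl⟩
      obtain ⟨a, haA, haeq⟩ := hπx
      have hbN : a⁻¹ * x ∈ Nhat := by
        rw [← QuotientGroup.ker_mk' Nhat, MonoidHom.mem_ker, map_mul, map_inv, haeq]
        simp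
      have hbAp : a⁻¹ * x ∈ Ap p := mul_mem (inv_mem (hAle p haA)) hx
      obtain ⟨t, hbsplit, htp, htq⟩ := comp_split hle e hcompat hbN p
      set u : G := ((e ⟨a⁻¹ * x, hbN⟩ p : ↥(Np p)) : G) with hudef
      have huApp : u ∈ Ap p :=
        comp_mem hle e hNopen hnorm hproq he he' hcompat (hAp1 p).1 hbAp hbN p
      have huNp : u ∈ Np p := (e ⟨a⁻¹ * x, hbN⟩ p).2
      have huA : u ∈ A := by
        rw [hAdef, Subgroup.mem_iInf]
        intro q
        by_cases hqp : q = p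
        · subst hqp; exact huApp
        · exact hNple q p (fun hh => hqp hh.symm) huNp
      have htTp : (t : G) ∈ Tp p := by
        rw [hTpTP p, mem_TP_iff hle e hNopen he he' hcompat]
        refine ⟨t.2, fun q hq => ?_⟩
        rw [Subtype.coe_eta]
        have hqp : q = p := by simpa using hq
        subst hqp
        exact htp
      have hx4 : x = a * (u * (t : G)) := by
        rw [← hbsplit]
        group
      rw [hx4]
      refine mul_mem ((le_sup_left : A ≤ A ⊔ Tp p) haA) ?_
      exact mul_mem ((le_sup_left : A ≤ A ⊔ Tp p) huA)
        ((le_sup_right : Tp p ≤ A ⊔ Tp p) htTp)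
end

section
/- Let H be an open subgroup of ℤ_p^h (p-adic integers) generated by the rows t_1,…,t_h of an upper triangular matrix t ∈ Tr(h, ℤ_p) with nonzero diagonal. Then the index of H in ℤ_p^h equals ∏_{i=1}^h |t_ii|_p^{-1}. -/
open scoped Matrix

section Aux

variable {p : ℕ} [Fact p.Prime]

lemma auxPadicNormProd {ι : Type*} (s : Finset ι) (f : ι → ℤ_[p]) :
    ‖∏ i ∈ s, f i‖ = ∏ i ∈ s, ‖f i‖ := by
  classical
  induction s using Finset.induction with
  | empty => simp
  | insert _ _ hx ih =>
      rw [Finset.prod_insert hx, Finset.prod_insert hx, norm_mul, ih]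

lemma auxIndexSpanSingleton {a : ℤ_[p]} (ha : a ≠ 0) :
    (((Ideal.span {a}).toAddSubgroup.index : ℝ)) = ‖a‖⁻¹ := by
  classical
  set n := a.valuation with hn
  have hassoc : Associated ((p : ℤ_[p]) ^ n) a :=
    ⟨PadicInt.unitCoeff ha, by rw [mul_comm]; exact (PadicInt.unitCoeff_spec ha).symm⟩
  have hspan : Ideal.span ({a} : Set ℤ_[p]) = Ideal.span {(p : ℤ_[p]) ^ n} := by
    rw [Ideal.span_singleton_eq_span_singleton]
    exact hassoc.symm
  set f : ℤ_[p] →+ ZMod (p ^ n) := (PadicInt.toZModPow n).toAddMonoidHom with hf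
  have hker : (Ideal.span {(p : ℤ_[p]) ^ n}).toAddSubgroup = f.ker := by
    ext x
    have := PadicInt.ker_toZModPow (p := p) n
    simp only [Submodule.mem_toAddSubgroup, AddMonoidHom.mem_ker, hf,
      RingHom.toAddMonoidHom_eq_coe, AddMonoidHom.coe_coe]
    rw [← this, RingHom.mem_ker]
  have hsurj : Function.Surjective f := by
    intro y
    refine ⟨((y.val : ℕ) : ℤ_[p]), ?_⟩
    have : f ((y.val : ℕ) : ℤ_[p]) = ((y.val : ℕ) : ZMod (p ^ n)) := by
      simp [hf]
    rw [this, ZMod.natCast_val, ZMod.cast_id]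
  have hidx : (Ideal.span {a}).toAddSubgroup.index = p ^ n := by
    rw [hspan, hker, AddSubgroup.index_ker]
    have hr : f.range = ⊤ := AddMonoidHom.range_eq_top.mpr hsurj
    rw [hr]
    rw [Nat.card_congr AddSubgroup.topEquiv.toEquiv, Nat.card_zmod]
  have hp : (1 : ℕ) < p := (Fact.out : p.Prime).one_lt
  have hnorm : ‖a‖ = ((p : ℝ) ^ n)⁻¹ := by
    conv_lhs => rw [PadicInt.unitCoeff_spec ha]
    rw [norm_mul, PadicInt.norm_units, one_mul, ← hn, norm_pow,
      PadicInt.norm_p, inv_pow]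
  rw [hidx, hnorm, inv_inv]
  push_cast
  ring

lemma auxRowsLI {h : ℕ} (t : Matrix (Fin h) (Fin h) ℤ_[p])
    (htri : ∀ i j : Fin h, j < i → t i j = 0)
    (hdiag : ∀ i : Fin h, t i i ≠ 0) :
    LinearIndependent ℤ_[p] (fun i : Fin h => t i) := by
  rw [Fintype.linearIndependent_iff]
  intro g hg
  have key : ∀ m : ℕ, ∀ j : Fin h, (j : ℕ) = m → g j = 0 := by
    intro m
    induction m using Nat.strong_induction_on with
    | _ m ih =>
      intro j hj
      have hcol : ∑ i, g i * t i j = 0 := by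
        have := congrFun hg j
        simpa using this
      have hsum : ∑ i, g i * t i j = g j * t j j := by
        apply Finset.sum_eq_single
        · intro i _ hij
          rcases lt_or_gt_of_ne hij with hlt | hgt
          · rw [ih (i : ℕ) (by omega) i rfl, zero_mul]
          · rw [htri i j hgt, mul_zero]
        · intro hji; exact absurd (Finset.mem_univ j) hji
      rw [hsum] at hcol
      rcases mul_eq_zero.mp hcol with h0 | h0
      · exact h0
      · exact absurd h0 (hdiag j)
  exact fun j => key (j : ℕ) j rfl

end Aux

/-- Let `H ≤ ℤ_p^h` be the subgroup generated by the rows `t₁, …, t_h` of an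
upper triangular matrix `t` over `ℤ_p` with nonzero diagonal.  Then the index
of `H` in `ℤ_p^h` equals `∏ᵢ |t_ii|_p⁻¹`. -/
theorem stmt11 (p : ℕ) [Fact p.Prime] (h : ℕ)
    (t : Matrix (Fin h) (Fin h) ℤ_[p])
    (htri : ∀ i j : Fin h, j < i → t i j = 0)
    (hdiag : ∀ i : Fin h, t i i ≠ 0) :
    (((Submodule.span ℤ_[p] (Set.range fun i : Fin h => t i)).toAddSubgroup.index : ℝ)) =
      ∏ i : Fin h, ‖t i i‖⁻¹ := by
  classical
  set N : Submodule ℤ_[p] (Fin h → ℤ_[p]) :=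
    Submodule.span ℤ_[p] (Set.range fun i : Fin h => t i) with hNdef
  have hli : LinearIndependent ℤ_[p] (fun i : Fin h => t i) := auxRowsLI t htri hdiag
  let rowsBasis : Module.Basis (Fin h) ℤ_[p] N := Module.Basis.span hli
  obtain ⟨n, snf⟩ := N.smithNormalForm (Pi.basisFun ℤ_[p] (Fin h))
  have hn : n = h := by
    have e := snf.bN.indexEquiv rowsBasis
    simpa using Fintype.card_congr e
  subst n
  have ha : ∀ i, snf.a i ≠ 0 := by
    intro i hi
    apply snf.bN.ne_zero i
    have h1 := snf.snf i
    rw [hi, zero_smul] at h1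
    exact Subtype.coe_injective h1
  set σ : Fin h ≃ Fin h :=
    Equiv.ofBijective snf.f (Finite.injective_iff_bijective.mp snf.f.injective) with hσ
  set C : Matrix (Fin h) (Fin h) ℤ_[p] := (snf.bN.toMatrix rowsBasis)ᵀ with hC
  set D : Matrix (Fin h) (Fin h) ℤ_[p] :=
    ((Pi.basisFun ℤ_[p] (Fin h)).toMatrix (⇑snf.bM ∘ ⇑σ))ᵀ with hD
  have hmat : t = C * (Matrix.diagonal snf.a * D) := by
    ext i k
    have hrow : ((rowsBasis i : N) : Fin h → ℤ_[p]) = t i := congrArg Subtype.val (Module.Basis.span_apply hli i)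
    set c : Fin h → ℤ_[p] := fun j => snf.bN.repr (rowsBasis i) j with hc
    have hexp := snf.bN.sum_repr (rowsBasis i)
    have hexp' : (t i : Fin h → ℤ_[p]) =
        ∑ j, c j • ((snf.bN j : N) : Fin h → ℤ_[p]) := by
      rw [← hrow, ← hexp]
      push_cast
      rfl
    have := congrFun hexp' k
    rw [this, Finset.sum_apply]
    rw [Matrix.mul_apply]
    apply Finset.sum_congr rfl
    intro j _
    rw [Matrix.diagonal_mul, hC, hD]
    simp only [Matrix.transpose_apply, Module.Basis.toMatrix_apply, Pi.basisFun_repr,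
      Function.comp_apply]
    rw [snf.snf j]
    have hfσ : snf.f j = σ j := rfl
    rw [hfσ]
    simp [hc, Pi.smul_apply, smul_eq_mul, mul_assoc, mul_comm, mul_left_comm]
  have hCunit : IsUnit C.det := by
    rw [hC, Matrix.det_transpose]
    have := snf.bN.invertibleToMatrix rowsBasis
    exact Matrix.isUnit_det_of_invertible _
  have hDunit : IsUnit D.det := by
    rw [hD, Matrix.det_transpose]
    have hbasis : (⇑snf.bM ∘ ⇑σ) = ⇑(snf.bM.reindex σ.symm) := by
      funext j; simp [Module.Basis.reindex_apply]
    rw [hbasis]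
    have := (Pi.basisFun ℤ_[p] (Fin h)).invertibleToMatrix (snf.bM.reindex σ.symm)
    exact Matrix.isUnit_det_of_invertible _
  have hdetnorm : ‖∏ i, t i i‖ = ‖∏ i, snf.a i‖ := by
    have hdt : t.det = ∏ i, t i i :=
      Matrix.det_of_upperTriangular (fun i j hij => htri i j hij)
    rw [← hdt, hmat, Matrix.det_mul, Matrix.det_mul, Matrix.det_diagonal,
      norm_mul, norm_mul, PadicInt.isUnit_iff.mp hCunit,
      PadicInt.isUnit_iff.mp hDunit, one_mul, mul_one]
  have hidx := snf.toAddSubgroup_index_eq_pow_mul_prod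
  rw [hidx]
  simp only [Fintype.card_fin, Nat.sub_self, pow_zero, one_mul]
  push_cast
  rw [Finset.prod_congr rfl (fun i _ => auxIndexSpanSingleton (ha i))]
  rw [Finset.prod_inv_distrib, Finset.prod_inv_distrib,
    ← auxPadicNormProd, ← auxPadicNormProd, hdetnorm]
end

section
/- Let 1 → N → G → F → 1 be exact with F finite, and let B ≤ N be a finite-index subgroup of N. Suppose A ⊆ G is a union A = B ∪ ⋃_{f∈K∖{1}} g_f n_f B where K ≤ F, π(g_f)=f, n_f ∈ N, and exactly one coset appears per f ∈ K. Then A is a subgroup of G if and only if: (1) (g_f n_f)^{-1} b (g_f n_f) ∈ B for all b in a generating set of B and all f ∈ K∖{1}; (2) (g_{ff'} n_{ff'})^{-1} g_f n_f g_{f'} n_{f'} ∈ B for all f, f' ∈ K∖{1} with ff' ≠ 1; (3) g_f n_f g_{f^{-1}} n_{f^{-1}} ∈ B for all f ∈ K∖{1}. -/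
/-- Subgroup criterion for a union of cosets `B ∪ ⋃_{f ∈ K∖{1}} g_f n_f B` in a
group `G` with normal subgroup `N` of finite quotient `F = G ⧸ N`: the union is
a subgroup iff (1) conjugation by each `g_f n_f` sends a generating set of `B`
into `B`; (2) `(g_{ff'} n_{ff'})⁻¹ g_f n_f g_{f'} n_{f'} ∈ B` for `f, f' ∈ K∖{1}`
with `ff' ≠ 1`; and (3) `g_f n_f g_{f⁻¹} n_{f⁻¹} ∈ B` for `f ∈ K∖{1}`. -/
theorem stmt14 {G : Type*} [Group G] (N : Subgroup G) [N.Normal]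
    [Finite (G ⧸ N)]
    (g : (G ⧸ N) → G) (hg : ∀ f, QuotientGroup.mk' N (g f) = f)
    (hg1 : g 1 = 1) (hginv : ∀ f, g f⁻¹ = (g f)⁻¹)
    (K : Subgroup (G ⧸ N))
    (n : (G ⧸ N) → G) (hn : ∀ f, n f ∈ N) (hn1 : n 1 = 1)
    (B : Subgroup G) (hBN : B ≤ N) (hBfin : (B.subgroupOf N).FiniteIndex)
    (S : Set G) (hS : Subgroup.closure S = B) :
    (∃ A : Subgroup G, (A : Set G) =
        (B : Set G) ∪
          ⋃ f ∈ ((K : Set (G ⧸ N)) \ {1}),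
            (fun b => g f * n f * b) '' (B : Set G)) ↔
      ((∀ f ∈ ((K : Set (G ⧸ N)) \ {1}), ∀ b ∈ S,
          (g f * n f)⁻¹ * b * (g f * n f) ∈ B) ∧
        (∀ f ∈ ((K : Set (G ⧸ N)) \ {1}), ∀ f' ∈ ((K : Set (G ⧸ N)) \ {1}),
          f * f' ≠ 1 →
          (g (f * f') * n (f * f'))⁻¹ * (g f * n f) * (g f' * n f') ∈ B) ∧
        (∀ f ∈ ((K : Set (G ⧸ N)) \ {1}),
          g f * n f * (g f⁻¹ * n f⁻¹) ∈ B)) := by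
  have hπn : ∀ f, QuotientGroup.mk' N (n f) = 1 := fun f =>
    (QuotientGroup.eq_one_iff _).2 (hn f)
  have hπB : ∀ b, b ∈ B → QuotientGroup.mk' N b = 1 := fun b hb =>
    (QuotientGroup.eq_one_iff _).2 (hBN hb)
  have hc : ∀ f, QuotientGroup.mk' N (g f * n f) = f := fun f => by
    rw [map_mul, hg, hπn, mul_one]
  have hcb : ∀ f b, b ∈ B → QuotientGroup.mk' N (g f * n f * b) = f := fun f b hb => by
    rw [map_mul, hc, hπB b hb, mul_one]
  constructor
  · rintro ⟨A, hA⟩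
    have hBA : ∀ b, b ∈ B → b ∈ A := fun b hb => by
      rw [← SetLike.mem_coe, hA]; exact Or.inl hb
    have hcoset : ∀ f, f ∈ ((K : Set (G ⧸ N)) \ {1}) → ∀ b, b ∈ B →
        g f * n f * b ∈ A := by
      intro f hf b hb
      rw [← SetLike.mem_coe, hA]
      exact Or.inr (Set.mem_biUnion hf ⟨b, hb, rfl⟩)
    have hcA : ∀ f, f ∈ ((K : Set (G ⧸ N)) \ {1}) → g f * n f ∈ A := fun f hf => by
      simpa using hcoset f hf 1 B.one_mem
    have hA1 : ∀ x, x ∈ A → QuotientGroup.mk' N x = 1 → x ∈ B := by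
      intro x hx hx1
      rw [← SetLike.mem_coe, hA] at hx
      rcases hx with hx | hx
      · exact hx
      · simp only [Set.mem_iUnion, Set.mem_image, SetLike.mem_coe] at hx
        obtain ⟨f, hf, b, hb, rfl⟩ := hx
        exact absurd ((hcb f b hb).symm.trans hx1) (by simpa using hf.2)
    have hAf : ∀ x, x ∈ A → ∀ f, QuotientGroup.mk' N x = f → f ≠ 1 →
        ∃ b ∈ B, x = g f * n f * b := by
      intro x hx f hxf hfne
      rw [← SetLike.mem_coe, hA] at hx
      rcases hx with hx | hx
      · exact absurd (hxf.symm.trans (hπB x hx)) hfne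
      · simp only [Set.mem_iUnion, Set.mem_image, SetLike.mem_coe] at hx
        obtain ⟨f', hf', b, hb, rfl⟩ := hx
        have : f' = f := (hcb f' b hb).symm.trans hxf
        subst this
        exact ⟨b, hb, rfl⟩
    refine ⟨?_, ?_, ?_⟩
    · intro f hf b hb
      have hbB : b ∈ B := hS ▸ Subgroup.subset_closure hb
      have hz : (g f * n f)⁻¹ * b * (g f * n f) ∈ A :=
        A.mul_mem (A.mul_mem (A.inv_mem (hcA f hf)) (hBA b hbB)) (hcA f hf)
      refine hA1 _ hz ?_
      rw [map_mul, map_mul, map_inv, hc, hπB b hbB, mul_one, inv_mul_cancel]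
    · intro f hf f' hf' hff'
      have hz : (g f * n f) * (g f' * n f') ∈ A :=
        A.mul_mem (hcA f hf) (hcA f' hf')
      have hπz : QuotientGroup.mk' N ((g f * n f) * (g f' * n f')) = f * f' := by
        rw [map_mul, hc, hc]
      obtain ⟨b, hb, heq⟩ := hAf _ hz (f * f') hπz hff'
      have : (g (f * f') * n (f * f'))⁻¹ * ((g f * n f) * (g f' * n f')) ∈ B := by
        rw [heq, inv_mul_cancel_left]; exact hb
      simpa [mul_assoc] using this
    · intro f hf
      have hfinv : f⁻¹ ∈ ((K : Set (G ⧸ N)) \ {1}) :=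
        ⟨K.inv_mem hf.1, by simpa using hf.2⟩
      have hz : (g f * n f) * (g f⁻¹ * n f⁻¹) ∈ A :=
        A.mul_mem (hcA f hf) (hcA f⁻¹ hfinv)
      exact hA1 _ hz (by rw [map_mul, hc, hc, mul_inv_cancel])
  · rintro ⟨h1, h2, h3⟩
    have h1' : ∀ f, f ∈ ((K : Set (G ⧸ N)) \ {1}) → ∀ b, b ∈ B →
        (g f * n f)⁻¹ * b * (g f * n f) ∈ B := by
      intro f hf
      have hsub : Subgroup.closure S ≤
          Subgroup.comap (MulAut.conj ((g f * n f)⁻¹)).toMonoidHom B := by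
        refine (Subgroup.closure_le _).2 fun s hs => ?_
        show s ∈ Subgroup.comap (MulAut.conj ((g f * n f)⁻¹)).toMonoidHom B
        simp only [Subgroup.mem_comap, MulEquiv.coe_toMonoidHom, MulAut.conj_apply, inv_inv]
        exact h1 f hf s hs
      intro b hb
      have hb' : b ∈ Subgroup.closure S := by rw [hS]; exact hb
      have := hsub hb'
      simp only [Subgroup.mem_comap, MulEquiv.coe_toMonoidHom, MulAut.conj_apply,
        inv_inv] at this
      exact this
    have hmem : ∀ x : G, (x ∈ (B : Set G) ∪
        ⋃ f ∈ ((K : Set (G ⧸ N)) \ {1}), (fun b => g f * n f * b) '' (B : Set G)) ↔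
        ∃ f, f ∈ K ∧ ∃ b, b ∈ B ∧ x = g f * n f * b := by
      intro x
      constructor
      · rintro (hx | hx)
        · exact ⟨1, K.one_mem, x, hx, by rw [hg1, hn1]; group⟩
        · simp only [Set.mem_iUnion, Set.mem_image, SetLike.mem_coe] at hx
          obtain ⟨f, hf, b, hb, rfl⟩ := hx
          exact ⟨f, hf.1, b, hb, rfl⟩
      · rintro ⟨f, hfK, b, hb, rfl⟩
        by_cases hf1 : f = 1
        · subst hf1
          left
          simpa [hg1, hn1] using hb
        · exact Or.inr (Set.mem_biUnion ⟨hfK, hf1⟩ ⟨b, hb, rfl⟩)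
    refine ⟨{ carrier := ((B : Set G) ∪ ⋃ f ∈ ((K : Set (G ⧸ N)) \ {1}),
                (fun b => g f * n f * b) '' (B : Set G))
              one_mem' := Or.inl B.one_mem
              mul_mem' := ?_
              inv_mem' := ?_ }, rfl⟩
    · intro x y hx hy
      obtain ⟨f, hfK, b, hb, rfl⟩ := (hmem x).1 hx
      obtain ⟨f', hfK', b', hb', rfl⟩ := (hmem y).1 hy
      refine (hmem _).2 ?_
      by_cases hf'1 : f' = 1
      · subst hf'1
        exact ⟨f, hfK, b * b', B.mul_mem hb hb', by rw [hg1, hn1]; group⟩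
      · have hb2 : (g f' * n f')⁻¹ * b * (g f' * n f') ∈ B := h1' f' ⟨hfK', hf'1⟩ b hb
        by_cases hf1 : f = 1
        · subst hf1
          exact ⟨f', hfK', ((g f' * n f')⁻¹ * b * (g f' * n f')) * b',
            B.mul_mem hb2 hb', by rw [hg1, hn1]; group⟩
        · by_cases hff' : f * f' = 1
          · have hf'eq : f' = f⁻¹ := (inv_eq_of_mul_eq_one_right hff').symm
            subst hf'eq
            have h3f := h3 f ⟨hfK, hf1⟩
            exact ⟨1, K.one_mem,
              (g f * n f * (g f⁻¹ * n f⁻¹)) * ((g f⁻¹ * n f⁻¹)⁻¹ * b * (g f⁻¹ * n f⁻¹)) * b',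
              B.mul_mem (B.mul_mem h3f hb2) hb', by rw [hg1, hn1]; group⟩
          · have h2f := h2 f ⟨hfK, hf1⟩ f' ⟨hfK', hf'1⟩ hff'
            exact ⟨f * f', K.mul_mem hfK hfK',
              ((g (f * f') * n (f * f'))⁻¹ * (g f * n f) * (g f' * n f')) *
                ((g f' * n f')⁻¹ * b * (g f' * n f')) * b',
              B.mul_mem (B.mul_mem h2f hb2) hb', by group⟩
    · intro x hx
      obtain ⟨f, hfK, b, hb, rfl⟩ := (hmem x).1 hx
      refine (hmem _).2 ?_
      by_cases hf1 : f = 1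
      · subst hf1
        exact ⟨1, K.one_mem, b⁻¹, B.inv_mem hb, by rw [hg1, hn1]; group⟩
      · have hfinv : f⁻¹ ∈ ((K : Set (G ⧸ N)) \ {1}) :=
          ⟨K.inv_mem hfK, fun h => hf1 (inv_eq_one.mp h)⟩
        have h3f := h3 f ⟨hfK, hf1⟩
        have hbc := h1' f⁻¹ hfinv b⁻¹ (B.inv_mem hb)
        exact ⟨f⁻¹, K.inv_mem hfK,
          ((g f⁻¹ * n f⁻¹)⁻¹ * b⁻¹ * (g f⁻¹ * n f⁻¹)) * (g f * n f * (g f⁻¹ * n f⁻¹))⁻¹,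
          B.mul_mem hbc (B.inv_mem h3f), by group⟩
end

section
/- In the setting of the previous statement, if A = B ∪ ⋃_{f∈K∖{1}} g_f n_f B is a subgroup of G, then π(A) = K and [G : A] = [F : K]·[N : B]. -/
/-- If the coset union `A = B ∪ ⋃_{f ∈ K∖{1}} g_f n_f B` is a subgroup of `G`,
then `π(A) = K` and `[G : A] = [F : K] · [N : B]`. -/
theorem stmt15 {G : Type*} [Group G] (N : Subgroup G) [N.Normal]
    [Finite (G ⧸ N)]
    (g : (G ⧸ N) → G) (hg : ∀ f, QuotientGroup.mk' N (g f) = f)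
    (hg1 : g 1 = 1) (hginv : ∀ f, g f⁻¹ = (g f)⁻¹)
    (K : Subgroup (G ⧸ N))
    (n : (G ⧸ N) → G) (hn : ∀ f, n f ∈ N) (hn1 : n 1 = 1)
    (B : Subgroup G) (hBN : B ≤ N) (hBfin : (B.subgroupOf N).FiniteIndex)
    (A : Subgroup G)
    (hA : (A : Set G) =
      (B : Set G) ∪
        ⋃ f ∈ ((K : Set (G ⧸ N)) \ {1}),
          (fun b => g f * n f * b) '' (B : Set G)) :
    A.map (QuotientGroup.mk' N) = K ∧
      A.index = K.index * B.relIndex N := by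
  set π := QuotientGroup.mk' N with hπ
  have hπker : π.ker = N := QuotientGroup.ker_mk' N
  have hπN : ∀ x ∈ N, π x = 1 := by
    intro x hx
    exact (QuotientGroup.eq_one_iff x).mpr hx
  -- membership description
  have hmem : ∀ x, x ∈ A ↔ x ∈ B ∨ ∃ f ∈ K, f ≠ 1 ∧ ∃ b ∈ B, g f * n f * b = x := by
    intro x
    constructor
    · intro hx
      have : x ∈ (A : Set G) := hx
      rw [hA] at this
      rcases this with h | h
      · exact Or.inl h
      · simp only [Set.mem_iUnion, Set.mem_diff, Set.mem_singleton_iff, Set.mem_image,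
          SetLike.mem_coe] at h
        obtain ⟨f, ⟨hfK, hf1⟩, b, hb, hbx⟩ := h
        exact Or.inr ⟨f, hfK, hf1, b, hb, hbx⟩
    · intro hx
      have : x ∈ (A : Set G) := by
        rw [hA]
        rcases hx with h | ⟨f, hfK, hf1, b, hb, hbx⟩
        · exact Or.inl h
        · right
          simp only [Set.mem_iUnion, Set.mem_diff, Set.mem_singleton_iff, Set.mem_image,
            SetLike.mem_coe]
          exact ⟨f, ⟨hfK, hf1⟩, b, hb, hbx⟩
      exact this
  -- π of elements of A
  have hπA : ∀ x ∈ A, π x ∈ K := by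
    intro x hx
    rcases (hmem x).mp hx with h | ⟨f, hfK, _, b, hb, hbx⟩
    · rw [hπN x (hBN h)]; exact K.one_mem
    · have : π x = f := by
        rw [← hbx, map_mul, map_mul, hg, hπN _ (hn f), hπN _ (hBN hb), mul_one, mul_one]
      rw [this]; exact hfK
  -- first part: A.map π = K
  have hmap : A.map π = K := by
    apply le_antisymm
    · rintro y ⟨x, hx, rfl⟩
      exact hπA x hx
    · intro f hf
      by_cases hf1 : f = 1
      · exact ⟨1, A.one_mem, by rw [map_one, hf1]⟩
      · refine ⟨g f * n f, ?_, ?_⟩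
        · exact (hmem _).mpr (Or.inr ⟨f, hf, hf1, 1, B.one_mem, by group⟩)
        · rw [map_mul, hg, hπN _ (hn f), mul_one]
  -- B = A ⊓ N
  have hBA : B ≤ A := fun b hb => (hmem b).mpr (Or.inl hb)
  have hANB : A ⊓ N = B := by
    apply le_antisymm
    · rintro x ⟨hxA, hxN⟩
      rcases (hmem x).mp hxA with h | ⟨f, hfK, hf1, b, hb, hbx⟩
      · exact h
      · exfalso
        apply hf1
        have : π x = f := by
          rw [← hbx, map_mul, map_mul, hg, hπN _ (hn f), hπN _ (hBN hb), mul_one, mul_one]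
        rw [← this, hπN x hxN]
    · exact le_inf hBA hBN
  -- index computation
  have hNfin : N.index ≠ 0 := Subgroup.index_ne_zero_of_finite
  have hrel : N.relIndex (A ⊔ N) = B.relIndex A := by
    rw [Subgroup.relIndex_sup_right, ← Subgroup.inf_relIndex_right N A, inf_comm, hANB]
  have hrelne : B.relIndex A ≠ 0 := by
    rw [← hrel]
    intro h0
    exact hNfin (Subgroup.index_eq_zero_of_relIndex_eq_zero h0)
  have hKidx : K.index = (A ⊔ N).index := by
    rw [← hmap, Subgroup.index_map, hπker,
      MonoidHom.range_eq_top_of_surjective π (QuotientGroup.mk'_surjective N),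
      Subgroup.index_top, mul_one]
  have h1 : B.relIndex A * A.index = B.index := Subgroup.relIndex_mul_index hBA
  have h2 : B.relIndex N * N.index = B.index := Subgroup.relIndex_mul_index hBN
  have h3 : N.relIndex (A ⊔ N) * (A ⊔ N).index = N.index :=
    Subgroup.relIndex_mul_index le_sup_right
  refine ⟨hmap, ?_⟩
  have key : B.relIndex A * A.index = B.relIndex A * (K.index * B.relIndex N) := by
    rw [h1, ← h2, ← h3, hrel, hKidx]
    ring
  exact Nat.eq_of_mul_eq_mul_left (Nat.pos_of_ne_zero hrelne) key
end

section
/- Let (a_n) and (b_n) be sequences of nonnegative reals whose Dirichlet series A(s) = Σ a_n n^{-s} and B(s) = Σ b_n n^{-s} have Euler factorizations agreeing at all but finitely many primes, in the sense that A(s) = ∏_p A_p(s), B(s) = ∏_p B_p(s) with A_p = B_p for p outside a finite set T, and every local factor has abscissa of convergence strictly less than those of A and B. Then A(s) and B(s) have the same abscissa of convergence. -/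
/-- The abscissa of convergence (in `ℝ ∪ {±∞}`, i.e. `EReal`) of a Dirichlet
series `Σ aₙ n^{-s}` with real coefficients. -/
noncomputable def dirAbscissa (a : ℕ → ℝ) : EReal :=
  sInf ((fun s : ℝ => (s : EReal)) ''
    {s : ℝ | Summable fun n : ℕ => a n * (n : ℝ) ^ (-s)})

/-- The abscissa of convergence of a local Euler factor `Σ_k L_k p^{-ks}`. -/
noncomputable def localAbscissa (p : ℕ) (L : ℕ → ℝ) : EReal :=
  sInf ((fun s : ℝ => (s : EReal)) ''
    {s : ℝ | Summable fun k : ℕ => L k * (p : ℝ) ^ (-((k : ℝ) * s))})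

lemma dir_mono (a : ℕ → ℝ) (ha : ∀ n, 0 ≤ a n) {s s' : ℝ} (hss : s' ≤ s)
    (h : Summable fun n : ℕ => a n * (n : ℝ) ^ (-s')) :
    Summable fun n : ℕ => a n * (n : ℝ) ^ (-s) := by
  rw [← summable_nat_add_iff 1] at h ⊢
  refine h.of_nonneg_of_le (fun n => mul_nonneg (ha _) (Real.rpow_nonneg (by positivity) _))
    (fun n => ?_)
  refine mul_le_mul_of_nonneg_left ?_ (ha _)
  exact Real.rpow_le_rpow_of_exponent_le (by exact_mod_cast Nat.le_add_left 1 n)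
    (neg_le_neg hss)

lemma loc_mono (p : ℕ) (hp : 1 ≤ p) (L : ℕ → ℝ) (hL : ∀ k, 0 ≤ L k) {s s' : ℝ} (hss : s' ≤ s)
    (h : Summable fun k : ℕ => L k * (p : ℝ) ^ (-((k : ℝ) * s'))) :
    Summable fun k : ℕ => L k * (p : ℝ) ^ (-((k : ℝ) * s)) := by
  refine h.of_nonneg_of_le (fun k => mul_nonneg (hL _) (Real.rpow_nonneg (by positivity) _))
    (fun k => ?_)
  refine mul_le_mul_of_nonneg_left ?_ (hL _)
  exact Real.rpow_le_rpow_of_exponent_le (by exact_mod_cast hp)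
    (by nlinarith [Nat.cast_nonneg (α := ℝ) k])

lemma dir_summable_of_lt (a : ℕ → ℝ) (ha : ∀ n, 0 ≤ a n) {s : ℝ}
    (h : dirAbscissa a < (s : EReal)) :
    Summable fun n : ℕ => a n * (n : ℝ) ^ (-s) := by
  obtain ⟨x, hx, hxs⟩ := sInf_lt_iff.mp h
  obtain ⟨s', hs', rfl⟩ := hx
  exact dir_mono a ha ((EReal.coe_lt_coe_iff.mp hxs).le) hs'

lemma loc_summable_of_lt (p : ℕ) (hp : 1 ≤ p) (L : ℕ → ℝ) (hL : ∀ k, 0 ≤ L k) {s : ℝ}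
    (h : localAbscissa p L < (s : EReal)) :
    Summable fun k : ℕ => L k * (p : ℝ) ^ (-((k : ℝ) * s)) := by
  obtain ⟨x, hx, hxs⟩ := sInf_lt_iff.mp h
  obtain ⟨s', hs', rfl⟩ := hx
  exact loc_mono p hp L hL ((EReal.coe_lt_coe_iff.mp hxs).le) hs'

lemma dir_le_of_summable (a : ℕ → ℝ) {s : ℝ}
    (h : Summable fun n : ℕ => a n * (n : ℝ) ^ (-s)) :
    dirAbscissa a ≤ (s : EReal) :=
  sInf_le ⟨s, h, rfl⟩

lemma key (a b : ℕ → ℝ) (ha : ∀ n, 0 ≤ a n)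
    (La Lb : ℕ → ℕ → ℝ)
    (hLa0 : ∀ p : Nat.Primes, La p 0 = 1)
    (hLa : ∀ (p : Nat.Primes) (k : ℕ), 0 ≤ La p k)
    (hLb : ∀ (p : Nat.Primes) (k : ℕ), 0 ≤ Lb p k)
    (T : Finset ℕ) (hT : ∀ p ∈ T, p.Prime)
    (hagree : ∀ p : Nat.Primes, (p : ℕ) ∉ T → La p = Lb p)
    (hEa : ∀ s : ℝ,
      (Summable fun n : ℕ => a n * (n : ℝ) ^ (-s)) ↔
        ((∀ p : Nat.Primes,
            Summable fun k : ℕ => La p k * ((p : ℕ) : ℝ) ^ (-((k : ℝ) * s))) ∧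
          Multipliable fun p : Nat.Primes =>
            ∑' k : ℕ, La p k * ((p : ℕ) : ℝ) ^ (-((k : ℝ) * s))))
    (hEb : ∀ s : ℝ,
      (Summable fun n : ℕ => b n * (n : ℝ) ^ (-s)) ↔
        ((∀ p : Nat.Primes,
            Summable fun k : ℕ => Lb p k * ((p : ℕ) : ℝ) ^ (-((k : ℝ) * s))) ∧
          Multipliable fun p : Nat.Primes =>
            ∑' k : ℕ, Lb p k * ((p : ℕ) : ℝ) ^ (-((k : ℝ) * s))))
    (hlocB : ∀ p : Nat.Primes, localAbscissa p (Lb p) < dirAbscissa b) :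
    dirAbscissa b ≤ dirAbscissa a := by
  by_contra hcon
  push_neg at hcon
  set x : EReal := dirAbscissa a ⊔ T.sup (fun p => localAbscissa p (Lb p)) with hxdef
  have hx : x < dirAbscissa b := by
    refine sup_lt_iff.mpr ⟨hcon, ?_⟩
    refine Finset.sup_lt_iff (bot_le.trans_lt hcon) |>.mpr (fun p hp => ?_)
    exact hlocB ⟨p, hT p hp⟩
  obtain ⟨s, hxs, hsB⟩ := EReal.exists_between_coe_real hx
  have hA : Summable fun n : ℕ => a n * (n : ℝ) ^ (-s) :=
    dir_summable_of_lt a ha (lt_of_le_of_lt le_sup_left hxs)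
  obtain ⟨hA1, hA2⟩ := (hEa s).mp hA
  have hB1 : ∀ p : Nat.Primes,
      Summable fun k : ℕ => Lb p k * ((p : ℕ) : ℝ) ^ (-((k : ℝ) * s)) := by
    intro p
    by_cases hpT : (p : ℕ) ∈ T
    · refine loc_summable_of_lt (p : ℕ) p.2.one_lt.le (Lb p) (hLb p) ?_
      exact lt_of_le_of_lt
        (le_trans (Finset.le_sup (f := fun q => localAbscissa q (Lb q)) hpT) le_sup_right) hxs
    · rw [← hagree p hpT]; exact hA1 p
  set f : Nat.Primes → ℝ :=
    fun p => ∑' k : ℕ, La p k * ((p : ℕ) : ℝ) ^ (-((k : ℝ) * s)) with hfdef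
  set g : Nat.Primes → ℝ :=
    fun p => ∑' k : ℕ, Lb p k * ((p : ℕ) : ℝ) ^ (-((k : ℝ) * s)) with hgdef
  have hf1 : ∀ p, (1 : ℝ) ≤ f p := by
    intro p
    have := Summable.le_tsum (hA1 p) 0
      (fun k _ => mul_nonneg (hLa p k) (Real.rpow_nonneg (by positivity) _))
    simpa [hLa0 p] using this
  have hfne : ∀ p, f p ≠ 0 := fun p => ne_of_gt (lt_of_lt_of_le one_pos (hf1 p))
  have hfin : (Function.mulSupport (fun p => g p / f p)).Finite := by
    refine Set.Finite.subset (Set.Finite.preimage (Subtype.coe_injective.injOn)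
      T.finite_toSet) ?_
    intro p hp
    by_contra hpT
    exact hp (by rw [hgdef, hfdef]; simp only [← hagree p hpT, div_self (hfne p)]; exact div_self (hfne p))
  have hg : Multipliable g := by
    have := (multipliable_of_finite_mulSupport hfin).mul hA2
    have heq : (fun p : Nat.Primes => g p / f p * f p) = g := by
      funext p
      exact div_mul_cancel₀ _ (hfne p)
    rwa [heq] at this
  have hB : Summable fun n : ℕ => b n * (n : ℝ) ^ (-s) := (hEb s).mpr ⟨hB1, hg⟩
  exact absurd (dir_le_of_summable b hB) (not_le.mpr hsB)

/-- If the Dirichlet series `A(s) = Σ aₙ n^{-s}` and `B(s) = Σ bₙ n^{-s}` with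
nonnegative coefficients admit Euler factorizations `A = ∏_p A_p`, `B = ∏_p B_p`
whose local factors (nonnegative coefficients, constant term `1`) agree outside
a finite set `T` of primes, and every local factor has abscissa of convergence
strictly less than those of `A` and `B`, then `A` and `B` have the same abscissa
of convergence. -/
theorem stmt18 (a b : ℕ → ℝ) (ha : ∀ n, 0 ≤ a n) (hb : ∀ n, 0 ≤ b n)
    (La Lb : ℕ → ℕ → ℝ)
    (hLa0 : ∀ p : Nat.Primes, La p 0 = 1) (hLb0 : ∀ p : Nat.Primes, Lb p 0 = 1)
    (hLa : ∀ (p : Nat.Primes) (k : ℕ), 0 ≤ La p k)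
    (hLb : ∀ (p : Nat.Primes) (k : ℕ), 0 ≤ Lb p k)
    (T : Finset ℕ) (hT : ∀ p ∈ T, p.Prime)
    (hagree : ∀ p : Nat.Primes, (p : ℕ) ∉ T → La p = Lb p)
    -- Euler factorization of `A`: convergence equivalence and equality of values
    (hEa : ∀ s : ℝ,
      (Summable fun n : ℕ => a n * (n : ℝ) ^ (-s)) ↔
        ((∀ p : Nat.Primes,
            Summable fun k : ℕ => La p k * ((p : ℕ) : ℝ) ^ (-((k : ℝ) * s))) ∧
          Multipliable fun p : Nat.Primes =>
            ∑' k : ℕ, La p k * ((p : ℕ) : ℝ) ^ (-((k : ℝ) * s))))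
    (hEa' : ∀ s : ℝ, (Summable fun n : ℕ => a n * (n : ℝ) ^ (-s)) →
      (∑' n : ℕ, a n * (n : ℝ) ^ (-s)) =
        ∏' p : Nat.Primes,
          ∑' k : ℕ, La p k * ((p : ℕ) : ℝ) ^ (-((k : ℝ) * s)))
    (hEb : ∀ s : ℝ,
      (Summable fun n : ℕ => b n * (n : ℝ) ^ (-s)) ↔
        ((∀ p : Nat.Primes,
            Summable fun k : ℕ => Lb p k * ((p : ℕ) : ℝ) ^ (-((k : ℝ) * s))) ∧
          Multipliable fun p : Nat.Primes =>
            ∑' k : ℕ, Lb p k * ((p : ℕ) : ℝ) ^ (-((k : ℝ) * s))))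
    (hEb' : ∀ s : ℝ, (Summable fun n : ℕ => b n * (n : ℝ) ^ (-s)) →
      (∑' n : ℕ, b n * (n : ℝ) ^ (-s)) =
        ∏' p : Nat.Primes,
          ∑' k : ℕ, Lb p k * ((p : ℕ) : ℝ) ^ (-((k : ℝ) * s)))
    -- each local factor converges strictly beyond the global abscissae
    (hlocA : ∀ p : Nat.Primes, localAbscissa p (La p) < dirAbscissa a)
    (hlocB : ∀ p : Nat.Primes, localAbscissa p (Lb p) < dirAbscissa b) :
    dirAbscissa a = dirAbscissa b := by
  refine le_antisymm
    (key b a hb Lb La hLb0 hLb hLa T hT (fun p hp => (hagree p hp).symm) hEb hEa hlocA)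
    (key a b ha La Lb hLa0 hLa hLb T hT hagree hEa hEb hlocB)
end

section
/- Let t ∈ Tr(h, ℤ_p) be upper triangular with nonzero diagonal entries, acting on ℤ_p^h, and let M(B) = {t ∈ Tr(h,ℤ_p) : rows of t generate the open subgroup B of ℤ_p^h}. Then M(B) is open in Tr(h,ℤ_p) and its Haar measure equals (1 - p^{-1})^h · ∏_{i=1}^h |t_ii|_p^i for any t ∈ M(B). -/
open MeasureTheory
open scoped ENNReal

section Aux
variable {p : ℕ} [Fact p.Prime]

lemma PadicInt.dvd_iff_norm_le' {a b : ℤ_[p]} (ha : a ≠ 0) : a ∣ b ↔ ‖b‖ ≤ ‖a‖ := by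
  have hs := PadicInt.unitCoeff_spec ha
  set u := PadicInt.unitCoeff ha
  set m := a.valuation with hm
  have hna : ‖a‖ = (p : ℝ) ^ (-(m : ℤ)) := by
    rw [hm, PadicInt.norm_eq_zpow_neg_valuation ha]
  have hdvd : a ∣ b ↔ ((p : ℤ_[p]) ^ m) ∣ b := by
    constructor
    · intro ⟨c, hc⟩
      exact ⟨(u : ℤ_[p]) * c, by rw [hc, hs]; ring⟩
    · intro ⟨c, hc⟩
      refine ⟨((u⁻¹ : ℤ_[p]ˣ) : ℤ_[p]) * c, ?_⟩
      rw [hc, hs, show ((u : ℤ_[p]) * (p : ℤ_[p]) ^ m) * (((u⁻¹ : ℤ_[p]ˣ) : ℤ_[p]) * c)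
        = ((u : ℤ_[p]) * ((u⁻¹ : ℤ_[p]ˣ) : ℤ_[p])) * ((p : ℤ_[p]) ^ m * c) by ring]
      rw [Units.mul_inv, one_mul]
  rw [hdvd, hna, ← Ideal.mem_span_singleton, ← PadicInt.norm_le_pow_iff_mem_span_pow]

/-- the valuation exponent as a natural number -/
noncomputable def pexp (a : ℤ_[p]) : ℕ := a.valuation

lemma norm_eq_pexp {a : ℤ_[p]} (ha : a ≠ 0) : ‖a‖ = (p : ℝ) ^ (-(pexp a : ℤ)) := by
  rw [PadicInt.norm_eq_zpow_neg_valuation ha, pexp]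

lemma dvd_pow_pexp {a : ℤ_[p]} (ha : a ≠ 0) : a ∣ (p : ℤ_[p]) ^ pexp a := by
  rw [PadicInt.dvd_iff_norm_le' ha, norm_eq_pexp ha, PadicInt.norm_p_pow]

lemma pow_pexp_dvd {a : ℤ_[p]} (ha : a ≠ 0) : (p : ℤ_[p]) ^ pexp a ∣ a := by
  have hp : ((p : ℤ_[p]) ^ pexp a) ≠ 0 :=
    pow_ne_zero _ (Nat.cast_ne_zero.mpr (Fact.out : p.Prime).ne_zero)
  rw [PadicInt.dvd_iff_norm_le' hp, norm_eq_pexp ha, PadicInt.norm_p_pow]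

lemma norm_le_of_dvd_pow {z : ℤ_[p]} {n : ℕ} (hd : (p : ℤ_[p]) ^ n ∣ z) :
    ‖z‖ ≤ (p : ℝ) ^ (-(n : ℤ)) := by
  obtain ⟨w, rfl⟩ := hd
  rw [norm_mul, PadicInt.norm_p_pow]
  exact mul_le_of_le_one_right (by positivity) (PadicInt.norm_le_one w)

end Aux

section Tri
variable {p : ℕ} [Fact p.Prime] {h : ℕ}

/-- upper triangular predicate -/
def UT {p h : ℕ} [Fact p.Prime] (t : Matrix (Fin h) (Fin h) ℤ_[p]) : Prop :=
  ∀ i j : Fin h, j < i → t i j = 0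

variable {t : Matrix (Fin h) (Fin h) ℤ_[p]} {B : Submodule ℤ_[p] (Fin h → ℤ_[p])}

lemma sumeval (ht : UT t) {c : Fin h → ℤ_[p]} {k : Fin h}
    (hlow : ∀ j, j < k → c j = 0) : (∑ j, c j • t j) k = c k * t k k := by
  rw [Finset.sum_apply]
  rw [Finset.sum_eq_single k]
  · rfl
  · intro j _ hjk
    rcases lt_or_gt_of_ne hjk with hlt | hgt
    · rw [hlow j hlt]; simp
    · have h0 := ht j k hgt
      simp [h0]
  · simp

lemma solveT (ht : UT t) {i : ℕ} (hdiag : ∀ l : Fin h, (l : ℕ) < i → t l l ≠ 0)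
    {c : Fin h → ℤ_[p]} (hx : ∀ l : Fin h, (l : ℕ) < i → (∑ j, c j • t j) l = 0) :
    ∀ l : Fin h, (l : ℕ) < i → c l = 0 := by
  suffices H : ∀ n : ℕ, ∀ l : Fin h, (l : ℕ) = n → (l : ℕ) < i → c l = 0 from
    fun l hl => H l l rfl hl
  intro n
  induction n using Nat.strong_induction_on with
  | _ n IH =>
    rintro l rfl hli
    have hsum := hx l hli
    rw [sumeval ht (fun j hj => IH j hj j rfl (lt_trans hj hli))] at hsum
    exact (mul_eq_zero.mp hsum).resolve_right (hdiag l hli)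

lemma exists_pow_single_mem (hB : IsOpen (B : Set (Fin h → ℤ_[p]))) :
    ∃ m : ℕ, ∀ j : Fin h, ((p : ℤ_[p]) ^ m) • ((Pi.single j (1 : ℤ_[p]) : Fin h → ℤ_[p]) : Fin h → ℤ_[p]) ∈ B := by
  have hp1 : ‖(p : ℤ_[p])‖ < 1 := by
    rw [PadicInt.norm_p]
    have : (1 : ℝ) < p := by exact_mod_cast (Fact.out : p.Prime).one_lt
    exact inv_lt_one_of_one_lt₀ this
  have hev : ∀ j : Fin h, ∃ mj : ℕ, ((p : ℤ_[p]) ^ mj) • ((Pi.single j (1 : ℤ_[p]) : Fin h → ℤ_[p]) : Fin h → ℤ_[p]) ∈ B := by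
    intro j
    have htend := (tendsto_pow_atTop_nhds_zero_of_norm_lt_one hp1).smul_const
      ((Pi.single j (1 : ℤ_[p]) : Fin h → ℤ_[p]))
    rw [zero_smul] at htend
    have := htend.eventually (hB.eventually_mem B.zero_mem)
    exact this.exists
  choose f hf using hev
  refine ⟨Finset.univ.sup f, fun j => ?_⟩
  have hle : f j ≤ Finset.univ.sup f := Finset.le_sup (Finset.mem_univ j)
  have : ((p : ℤ_[p]) ^ (Finset.univ.sup f)) • (Pi.single j (1 : ℤ_[p]) : Fin h → ℤ_[p]) =
      ((p : ℤ_[p]) ^ (Finset.univ.sup f - f j)) • (((p : ℤ_[p]) ^ (f j)) • (Pi.single j (1 : ℤ_[p]) : Fin h → ℤ_[p])) := by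
    rw [smul_smul, ← pow_add, Nat.sub_add_cancel hle]
  rw [this]
  exact B.smul_mem _ (hf j)

lemma diag_ne (ht : UT t)
    (hspan : Submodule.span ℤ_[p] (Set.range fun i : Fin h => t i) = B)
    (hB : IsOpen (B : Set (Fin h → ℤ_[p]))) : ∀ k : Fin h, t k k ≠ 0 := by
  obtain ⟨m, hm⟩ := exists_pow_single_mem hB
  suffices H : ∀ n : ℕ, ∀ k : Fin h, (k : ℕ) = n → t k k ≠ 0 from fun k => H k k rfl
  intro n
  induction n using Nat.strong_induction_on with
  | _ n IH =>
    rintro k rfl hk0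
    have hmem : ((p : ℤ_[p]) ^ m) • (Pi.single k (1 : ℤ_[p]) : Fin h → ℤ_[p]) ∈
        Submodule.span ℤ_[p] (Set.range fun i : Fin h => t i) := by
      rw [hspan]; exact hm k
    obtain ⟨c, hc⟩ := (Submodule.mem_span_range_iff_exists_fun ℤ_[p]).mp hmem
    have hlow : ∀ l : Fin h, (l : ℕ) < (k : ℕ) → (∑ j, c j • t j) l = 0 := by
      intro l hl
      rw [hc]
      have : l ≠ k := fun he => by simp [he] at hl
      simp [Pi.single_apply, this]
    have hcz := solveT ht (fun l hl => IH l hl l rfl) hlow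
    have hev := sumeval ht (c := c) (k := k) (fun j hj => hcz j hj)
    rw [hc] at hev
    rw [hk0, mul_zero] at hev
    simp only [Pi.smul_apply, Pi.single_eq_same, smul_eq_mul, mul_one] at hev
    exact pow_ne_zero m (Nat.cast_ne_zero.mpr (Fact.out : p.Prime).ne_zero :
      (p : ℤ_[p]) ≠ 0) hev

lemma repS (ht : UT t) (hdiag : ∀ l : Fin h, t l l ≠ 0)
    (hspan : Submodule.span ℤ_[p] (Set.range fun i : Fin h => t i) = B)
    {i : ℕ} {x : Fin h → ℤ_[p]} (hxB : x ∈ B)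
    (hlt : ∀ l : Fin h, (l : ℕ) < i → x l = 0) :
    ∃ c : Fin h → ℤ_[p], (∀ j : Fin h, (j : ℕ) < i → c j = 0) ∧ x = ∑ j, c j • t j := by
  have hx' : x ∈ Submodule.span ℤ_[p] (Set.range fun i : Fin h => t i) := by
    rw [hspan]; exact hxB
  obtain ⟨c, hc⟩ := (Submodule.mem_span_range_iff_exists_fun ℤ_[p]).mp hx'
  exact ⟨c, solveT ht (fun l _ => hdiag l) (fun l hl => by rw [hc]; exact hlt l hl), hc.symm⟩



lemma uniqNat (ht : UT t) (hdiag : ∀ l : Fin h, t l l ≠ 0) {g g' : Fin h → ℕ}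
    (hg : ∀ j, g j < p ^ pexp (t j j)) (hg' : ∀ j, g' j < p ^ pexp (t j j))
    {c : Fin h → ℤ_[p]}
    (heq : ∀ k : Fin h, ((g k : ℤ_[p]) - (g' k : ℤ_[p])) = (∑ j, c j • t j) k) :
    g = g' ∧ ∀ j, c j = 0 := by
  suffices H : ∀ n : ℕ, ∀ l : Fin h, (l : ℕ) = n → g l = g' l ∧ c l = 0 by
    exact ⟨funext fun l => (H l l rfl).1, fun l => (H l l rfl).2⟩
  intro n
  induction n using Nat.strong_induction_on with
  | _ n IH =>
    rintro l rfl
    have hsum : ((g l : ℤ_[p]) - (g' l : ℤ_[p])) = c l * t l l := by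
      rw [heq l, sumeval ht (fun j hj => (IH j hj j rfl).2)]
    have hdvd : ((p : ℤ_[p]) ^ pexp (t l l)) ∣ ((g l : ℤ_[p]) - (g' l : ℤ_[p])) := by
      rw [hsum]
      exact Dvd.dvd.mul_left (pow_pexp_dvd (hdiag l)) (c l)
    have hcast : ((g l : ℤ_[p]) - (g' l : ℤ_[p])) = (((g l : ℤ) - (g' l : ℤ) : ℤ) : ℤ_[p]) := by
      push_cast; ring
    have hint : ((p : ℤ) ^ pexp (t l l)) ∣ ((g l : ℤ) - (g' l : ℤ)) := by
      rw [← PadicInt.norm_int_le_pow_iff_dvd]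
      rw [← hcast]
      exact norm_le_of_dvd_pow hdvd
    have hgg : g l = g' l := by
      have hmod : g' l ≡ g l [MOD p ^ pexp (t l l)] := by
        rw [Nat.modEq_iff_dvd]
        exact_mod_cast hint
      exact (hmod.eq_of_lt_of_lt (hg' l) (hg l)).symm
    refine ⟨hgg, ?_⟩
    rw [hgg, sub_self] at hsum
    exact (mul_eq_zero.mp hsum.symm).resolve_right (hdiag l)

lemma rowExist (ht : UT t) (hdiag : ∀ l : Fin h, t l l ≠ 0) :
    ∀ (k : ℕ) (x : Fin h → ℤ_[p]), (∀ l : Fin h, (l : ℕ) < h - k → x l = 0) →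
    ∃ (d : Fin h → ℕ) (c : Fin h → ℤ_[p]),
      (∀ j, d j < p ^ pexp (t j j)) ∧ (∀ j : Fin h, (j : ℕ) < h - k → d j = 0) ∧
      (∀ j : Fin h, (j : ℕ) < h - k → c j = 0) ∧
      (fun l => x l - (d l : ℤ_[p])) = ∑ j, c j • t j := by
  intro k
  induction k with
  | zero =>
    intro x hx
    refine ⟨0, 0, fun j => pow_pos (Fact.out : p.Prime).pos _, fun _ _ => rfl, fun _ _ => rfl, ?_⟩
    funext l
    rw [hx l (by omega)]
    simp [Finset.sum_apply]
  | succ k IH =>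
    intro x hx
    by_cases hk : h ≤ k
    · have he : h - (k + 1) = h - k := by omega
      rw [he] at hx ⊢
      exact IH x hx
    · push_neg at hk
      set i := h - (k + 1) with hi
      have hik : h - k = i + 1 := by omega
      have hih : i < h := by omega
      set ι : Fin h := ⟨i, hih⟩ with hι
      haveI : NeZero (p ^ pexp (t ι ι)) :=
        ⟨pow_ne_zero _ (Fact.out : p.Prime).ne_zero⟩
      set dig : ℕ := (PadicInt.toZModPow (pexp (t ι ι)) (x ι)).val with hdig
      have hdiglt : dig < p ^ pexp (t ι ι) := ZMod.val_lt _
      have hker : (p : ℤ_[p]) ^ pexp (t ι ι) ∣ (x ι - (dig : ℤ_[p])) := by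
        have hcast : ((dig : ℕ) : ZMod (p ^ pexp (t ι ι))) =
            PadicInt.toZModPow (pexp (t ι ι)) (x ι) := ZMod.natCast_rightInverse _
        rw [← Ideal.mem_span_singleton, ← PadicInt.ker_toZModPow, RingHom.mem_ker, map_sub,
          map_natCast, hcast, sub_self]
      have htdvd : t ι ι ∣ (x ι - (dig : ℤ_[p])) :=
        dvd_trans (dvd_pow_pexp (hdiag ι)) hker
      obtain ⟨q, hq⟩ := htdvd
      set y : Fin h → ℤ_[p] := fun l => x l - (if l = ι then (dig : ℤ_[p]) else 0) - q * t ι l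
        with hy
      have hylow : ∀ l : Fin h, (l : ℕ) < h - k → y l = 0 := by
        intro l hl
        rw [hik] at hl
        rcases lt_or_eq_of_le (Nat.lt_succ_iff.mp hl) with hlt | heq
        · have hlι : l ≠ ι := fun he => by
            rw [he] at hlt; simp only [hι, Fin.val_mk] at hlt; omega
          have hlt' : l < ι := hlt
          simp only [hy]
          simp only [if_neg hlι]
          rw [hx l (by omega), ht ι l hlt']
          ring
        · have hlι : l = ι := Fin.ext heq
          subst hlι
          simp only [hy, eq_self_iff_true, if_true]
          rw [hq]
          ring
      obtain ⟨d', c', hd'b, hd'z, hc'z, hrep⟩ := IH y hylow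
      refine ⟨fun j => if j = ι then dig else d' j,
        fun j => c' j + (if j = ι then q else 0), ?_, ?_, ?_, ?_⟩
      · intro j
        beta_reduce
        by_cases hj : j = ι
        · rw [if_pos hj, hj]; exact hdiglt
        · rw [if_neg hj]; exact hd'b j
      · intro j hj
        beta_reduce
        have hjι : j ≠ ι := fun he => by
          rw [he] at hj; simp only [hι, Fin.val_mk] at hj; omega
        rw [if_neg hjι]
        exact hd'z j (by omega)
      · intro j hj
        beta_reduce
        have hjι : j ≠ ι := fun he => by
          rw [he] at hj; simp only [hι, Fin.val_mk] at hj; omega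
        rw [if_neg hjι]
        rw [hc'z j (by omega), add_zero]
      · have h1 : (∑ j, (c' j + (if j = ι then q else 0)) • t j)
            = (∑ j, c' j • t j) + q • t ι := by
          simp only [add_smul, Finset.sum_add_distrib, ite_smul, zero_smul,
            Finset.sum_ite_eq' Finset.univ ι (fun j => q • t j), Finset.mem_univ, if_pos]
        rw [h1, ← hrep]
        have hd'ι : d' ι = 0 := hd'z ι (by simp only [hι, Fin.val_mk, hik]; omega)
        funext l
        by_cases hl : l = ι
        · subst hl
          simp only [Pi.add_apply, Pi.smul_apply, smul_eq_mul, hy, Nat.cast_ite,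
            eq_self_iff_true, if_true, hd'ι, Nat.cast_zero]
          ring
        · simp only [Pi.add_apply, Pi.smul_apply, smul_eq_mul, hy, Nat.cast_ite, if_neg hl,
            Nat.cast_zero]
          ring
end Tri

lemma norm_mul_le_right {p : ℕ} [Fact p.Prime] (c a : ℤ_[p]) : ‖c * a‖ ≤ ‖a‖ := by
  rw [norm_mul]
  exact mul_le_of_le_one_left (norm_nonneg a) (PadicInt.norm_le_one c)

section Tri3
variable {p : ℕ} [Fact p.Prime] {h : ℕ}
variable {t : Matrix (Fin h) (Fin h) ℤ_[p]} {B : Submodule ℤ_[p] (Fin h → ℤ_[p])}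

lemma cond_of_span (ht : UT t) (hdiag : ∀ l : Fin h, t l l ≠ 0)
    (hspan : Submodule.span ℤ_[p] (Set.range fun i : Fin h => t i) = B)
    (hB : IsOpen (B : Set (Fin h → ℤ_[p])))
    {u : Matrix (Fin h) (Fin h) ℤ_[p]} (hu : UT u)
    (huspan : Submodule.span ℤ_[p] (Set.range fun i : Fin h => u i) = B) :
    ∀ i : Fin h, u i ∈ B ∧ ‖u i i‖ = ‖t i i‖ := by
  have hdiag_u : ∀ l : Fin h, u l l ≠ 0 := diag_ne hu huspan hB
  intro i
  have huiB : u i ∈ B := by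
    rw [← huspan]; exact Submodule.subset_span (Set.mem_range_self i)
  have htiB : t i ∈ B := by
    rw [← hspan]; exact Submodule.subset_span (Set.mem_range_self i)
  refine ⟨huiB, ?_⟩
  have hle1 : ‖u i i‖ ≤ ‖t i i‖ := by
    obtain ⟨c, hcz, hcrep⟩ := repS ht hdiag hspan huiB (fun l hl => hu i l hl)
    have : u i i = c i * t i i := by
      rw [hcrep]; exact sumeval ht (fun j hj => hcz j hj)
    rw [this]; exact norm_mul_le_right _ _
  have hle2 : ‖t i i‖ ≤ ‖u i i‖ := by
    obtain ⟨c, hcz, hcrep⟩ := repS hu hdiag_u huspan htiB (fun l hl => ht i l hl)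
    have : t i i = c i * u i i := by
      rw [hcrep]; exact sumeval hu (fun j hj => hcz j hj)
    rw [this]; exact norm_mul_le_right _ _
  exact le_antisymm hle1 hle2

lemma span_of_cond (ht : UT t) (hdiag : ∀ l : Fin h, t l l ≠ 0)
    (hspan : Submodule.span ℤ_[p] (Set.range fun i : Fin h => t i) = B)
    {u : Matrix (Fin h) (Fin h) ℤ_[p]} (hu : UT u)
    (hcond : ∀ i : Fin h, u i ∈ B ∧ ‖u i i‖ = ‖t i i‖) :
    Submodule.span ℤ_[p] (Set.range fun i : Fin h => u i) = B := by
  have hdiag_u : ∀ l : Fin h, u l l ≠ 0 := by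
    intro l hz
    have h2 := (hcond l).2
    rw [hz, norm_zero] at h2
    exact hdiag l (norm_eq_zero.mp h2.symm)
  apply le_antisymm
  · rw [Submodule.span_le]
    rintro _ ⟨i, rfl⟩
    exact (hcond i).1
  · have key : ∀ (k : ℕ) (x : Fin h → ℤ_[p]), x ∈ B →
        (∀ l : Fin h, (l : ℕ) < h - k → x l = 0) →
        x ∈ Submodule.span ℤ_[p] (Set.range fun i : Fin h => u i) := by
      intro k
      induction k with
      | zero =>
        intro x hxB hxz
        have hx0 : x = 0 := funext fun l => hxz l (by omega)
        rw [hx0]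
        exact Submodule.zero_mem _
      | succ k IH =>
        intro x hxB hxz
        by_cases hk : h ≤ k
        · exact IH x hxB (fun l hl => hxz l (by omega))
        · push_neg at hk
          set i := h - (k + 1) with hi
          have hih : i < h := by omega
          set ι : Fin h := ⟨i, hih⟩ with hι
          obtain ⟨c, hcz, hcrep⟩ := repS ht hdiag hspan hxB hxz
          have hxι : x ι = c ι * t ι ι := by
            rw [hcrep]; exact sumeval ht (fun j hj => hcz j hj)
          have hdl : u ι ι ∣ x ι := by
            rw [PadicInt.dvd_iff_norm_le' (hdiag_u ι), hxι, (hcond ι).2]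
            exact norm_mul_le_right _ _
          obtain ⟨q, hq⟩ := hdl
          have hyB : x - q • u ι ∈ B := B.sub_mem hxB (B.smul_mem q (hcond ι).1)
          have hyz : ∀ l : Fin h, (l : ℕ) < h - k → (x - q • u ι) l = 0 := by
            intro l hl
            have hl' : (l : ℕ) < i + 1 := by omega
            rcases lt_or_eq_of_le (Nat.lt_succ_iff.mp hl') with hlt | heq
            · have hlι : l < ι := hlt
              simp only [Pi.sub_apply, Pi.smul_apply, smul_eq_mul]
              rw [hxz l hlt, hu ι l hlι, mul_zero, sub_zero]
            · have hlι : l = ι := Fin.ext heq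
              subst hlι
              simp only [Pi.sub_apply, Pi.smul_apply, smul_eq_mul]
              rw [hq]; ring
          have hymem := IH (x - q • u ι) hyB hyz
          have huι : u ι ∈ Submodule.span ℤ_[p] (Set.range fun i : Fin h => u i) :=
            Submodule.subset_span (Set.mem_range_self ι)
          have : x = (x - q • u ι) + q • u ι := by ring
          rw [this]
          exact Submodule.add_mem _ hymem (Submodule.smul_mem _ q huι)
    intro x hxB
    exact key h x hxB (fun l hl => absurd hl (by omega))

end Tri3

section Part
variable {p : ℕ} [Fact p.Prime] {h : ℕ}

/-- moduli for the digit matrix -/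
noncomputable def ModNT (T : Matrix (Fin h) (Fin h) ℤ_[p]) (i j : Fin h) : ℕ :=
  if i ≤ j then p ^ pexp (T j j) else 1

/-- parameter space for coset representatives -/
abbrev Wsp (T : Matrix (Fin h) (Fin h) ℤ_[p]) : Type :=
  ((i : Fin h) → (j : Fin h) → Fin (ModNT T i j)) × (Fin h → Fin p)

/-- the representative matrix attached to a parameter -/
noncomputable def rhoMat (T : Matrix (Fin h) (Fin h) ℤ_[p]) (w : Wsp T) :
    Matrix (Fin h) (Fin h) ℤ_[p] :=
  fun i j => ((w.1 i j : ℕ) : ℤ_[p]) + ((w.2 i : ℕ) : ℤ_[p]) * T i j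

lemma ModN_le (T : Matrix (Fin h) (Fin h) ℤ_[p]) {i j : Fin h} {v : ℕ}
    (hv : v < ModNT T i j) : v < p ^ pexp (T j j) := by
  by_cases hij : i ≤ j
  · rwa [ModNT, if_pos hij] at hv
  · rw [ModNT, if_neg hij] at hv
    have : v = 0 := by omega
    rw [this]
    exact pow_pos (Fact.out : p.Prime).pos _

lemma ModN_pos (T : Matrix (Fin h) (Fin h) ℤ_[p]) (i j : Fin h) : 0 < ModNT T i j := by
  rw [ModNT]; split
  · exact pow_pos (Fact.out : p.Prime).pos _
  · exact one_pos

lemma ModN_val_zero {T : Matrix (Fin h) (Fin h) ℤ_[p]} {i j : Fin h} (hij : j < i)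
    (v : Fin (ModNT T i j)) : (v : ℕ) = 0 := by
  have hv := v.isLt
  have h1 : ModNT T i j = 1 := by
    rw [ModNT, if_neg (fun hc => absurd (lt_of_le_of_lt hc hij) (lt_irrefl _))]
  omega

lemma rhoUT {T : Matrix (Fin h) (Fin h) ℤ_[p]} (hT : UT T) (w : Wsp T) : UT (rhoMat T w) := by
  intro i j hij
  rw [rhoMat, ModN_val_zero hij (w.1 i j), hT i j hij]
  simp

/-- the "H" condition on a (difference) matrix -/
def Hmat (B : Submodule ℤ_[p] (Fin h → ℤ_[p])) (T x : Matrix (Fin h) (Fin h) ℤ_[p]) : Prop :=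
  ∀ i : Fin h, x i ∈ B ∧ ((p : ℤ_[p]) * T i i) ∣ x i i

lemma Hmat_sub {B : Submodule ℤ_[p] (Fin h → ℤ_[p])} {T x y : Matrix (Fin h) (Fin h) ℤ_[p]}
    (hx : Hmat B T x) (hy : Hmat B T y) : Hmat B T (x - y) := by
  intro i
  refine ⟨B.sub_mem (hx i).1 (hy i).1, ?_⟩
  have : (x - y) i i = x i i - y i i := rfl
  rw [this]
  exact dvd_sub (hx i).2 (hy i).2

lemma pdvd_sub_digit {p : ℕ} [Fact p.Prime] (z : ℤ_[p]) :
    (p : ℤ_[p]) ∣ (z - ((PadicInt.toZMod z).val : ℤ_[p])) := by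
  haveI : NeZero p := ⟨(Fact.out : p.Prime).ne_zero⟩
  have hcast : (((PadicInt.toZMod z).val : ℕ) : ZMod p) = PadicInt.toZMod z :=
    ZMod.natCast_rightInverse _
  rw [← Ideal.mem_span_singleton, ← PadicInt.maximalIdeal_eq_span_p, ← PadicInt.ker_toZMod,
    RingHom.mem_ker, map_sub, map_natCast, hcast, sub_self]

variable {T : Matrix (Fin h) (Fin h) ℤ_[p]} {B : Submodule ℤ_[p] (Fin h → ℤ_[p])}

lemma sum_sub_single (ht : UT T) (c : Fin h → ℤ_[p]) (i : Fin h) (av : ℤ_[p]) :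
    (∑ j, (c j - if j = i then av else 0) • T j) = (∑ j, c j • T j) - av • T i := by
  simp only [sub_smul, Finset.sum_sub_distrib, ite_smul, zero_smul,
    Finset.sum_ite_eq' Finset.univ i (fun j => av • T j), Finset.mem_univ, if_pos]

lemma mkRow (ht : UT T) (hdiag : ∀ l : Fin h, T l l ≠ 0) (htB : ∀ j : Fin h, T j ∈ B)
    {i : Fin h} {c : Fin h → ℤ_[p]} (hcz : ∀ j : Fin h, (j : ℕ) < (i : ℕ) → c j = 0)
    {av : ℕ} (hdig : (p : ℤ_[p]) ∣ (c i - (av : ℤ_[p]))) :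
    ((∑ j, c j • T j) - (av : ℤ_[p]) • T i) ∈ B ∧
    ((p : ℤ_[p]) * T i i) ∣ ((∑ j, c j • T j) - (av : ℤ_[p]) • T i) i := by
  constructor
  · exact B.sub_mem (Submodule.sum_smul_mem B c (fun j _ => htB j)) (B.smul_mem _ (htB i))
  · rw [← sum_sub_single ht c i ((av : ℤ_[p]))]
    rw [sumeval ht (c := fun j => c j - if j = i then (av : ℤ_[p]) else 0)
      (fun j hj => by
        show c j - (if j = i then ((av : ℕ) : ℤ_[p]) else 0) = 0
        rw [hcz j hj, if_neg (fun he => by rw [he] at hj; exact absurd hj (lt_irrefl _)), sub_zero])]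
    beta_reduce
    simp only [eq_self_iff_true, if_true]
    obtain ⟨e, he⟩ := hdig
    exact ⟨e, by rw [he]; ring⟩

/-- P1 : every upper triangular matrix is in some coset. -/
lemma LP1 (ht : UT T) (hdiag : ∀ l : Fin h, T l l ≠ 0)
    (hspan : Submodule.span ℤ_[p] (Set.range fun i : Fin h => T i) = B)
    (x : Matrix (Fin h) (Fin h) ℤ_[p]) (hx : UT x) :
    ∃ w : Wsp T, Hmat B T (x - rhoMat T w) := by
  haveI : NeZero p := ⟨(Fact.out : p.Prime).ne_zero⟩
  have htB : ∀ j : Fin h, T j ∈ B := fun j => by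
    rw [← hspan]; exact Submodule.subset_span (Set.mem_range_self j)
  have hrowdec : ∀ i : Fin h, ∃ (d : Fin h → ℕ) (c : Fin h → ℤ_[p]),
      (∀ j, d j < p ^ pexp (T j j)) ∧ (∀ j : Fin h, (j : ℕ) < (i : ℕ) → d j = 0) ∧
      (∀ j : Fin h, (j : ℕ) < (i : ℕ) → c j = 0) ∧
      (fun l => x i l - (d l : ℤ_[p])) = ∑ j, c j • T j := by
    intro i
    have hieq : h - (h - (i : ℕ)) = (i : ℕ) := by
      have := i.isLt; omega
    obtain ⟨d, c, hb, hdz, hcz, hrep⟩ := rowExist ht hdiag (h - (i : ℕ)) (x i)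
      (fun l hl => hx i l (by rw [hieq] at hl; exact hl))
    exact ⟨d, c, hb, fun j hj => hdz j (by rw [hieq]; exact hj),
      fun j hj => hcz j (by rw [hieq]; exact hj), hrep⟩
  choose D C hDb hDz hCz hrep using hrowdec
  have hWex : ∃ w : Wsp T, (∀ i j, ((w.1 i j : ℕ)) = D i j) ∧
      (∀ i, ((w.2 i : ℕ)) = (PadicInt.toZMod (C i i)).val) := by
    refine ⟨⟨fun i j => ⟨if i ≤ j then D i j else 0, ?_⟩,
      fun i => ⟨(PadicInt.toZMod (C i i)).val, ZMod.val_lt _⟩⟩, fun i j => ?_, fun i => rfl⟩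
    · rw [ModNT]; split
      · next hij => exact hDb i j
      · exact Nat.lt_one_iff.mpr rfl
    · show (if i ≤ j then D i j else 0) = D i j
      split
      · rfl
      · next hij =>
        rw [hDz i j (by
          have : (j : ℕ) < (i : ℕ) := by
            rcases lt_or_ge (j : ℕ) (i : ℕ) with hc | hc
            · exact hc
            · exact absurd hc hij
          exact this)]
  obtain ⟨w, hw1, hw2⟩ := hWex
  refine ⟨w, fun i => ?_⟩
  have hrowval : (x - rhoMat T w) i =
      (∑ j, C i j • T j) - (((PadicInt.toZMod (C i i)).val : ℕ) : ℤ_[p]) • T i := by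
    funext l
    have hx2 : x i l - ((D i l : ℕ) : ℤ_[p]) = (∑ j, C i j • T j) l := congrFun (hrep i) l
    simp only [Matrix.sub_apply, rhoMat, hw1, hw2, Pi.sub_apply, Pi.smul_apply, smul_eq_mul]
    rw [← hx2]
    ring
  rw [show ((x - rhoMat T w) i ∈ B ∧ ((p : ℤ_[p]) * T i i) ∣ (x - rhoMat T w) i i) =
    ((x - rhoMat T w) i ∈ B ∧ ((p : ℤ_[p]) * T i i) ∣ ((x - rhoMat T w) i) i) from rfl]
  rw [hrowval]
  exact mkRow ht hdiag htB (hCz i) (pdvd_sub_digit (C i i))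

/-- P2 : coset representatives are unique. -/
lemma LP2 (ht : UT T) (hdiag : ∀ l : Fin h, T l l ≠ 0)
    (hspan : Submodule.span ℤ_[p] (Set.range fun i : Fin h => T i) = B)
    (w w' : Wsp T) (hH : Hmat B T (rhoMat T w' - rhoMat T w)) : w = w' := by
  haveI : NeZero p := ⟨(Fact.out : p.Prime).ne_zero⟩
  have hpne : (p : ℤ_[p]) ≠ 0 := Nat.cast_ne_zero.mpr (Fact.out : p.Prime).ne_zero
  have hkey : ∀ i : Fin h, (∀ k : Fin h, ((w.1 i k : ℕ)) = ((w'.1 i k : ℕ))) ∧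
      ((w.2 i : ℕ)) = ((w'.2 i : ℕ)) := by
    intro i
    set z : Fin h → ℤ_[p] := (rhoMat T w' - rhoMat T w) i with hz
    have hzB : z ∈ B := (hH i).1
    have hzlow : ∀ l : Fin h, (l : ℕ) < (i : ℕ) → z l = 0 := by
      intro l hl
      have hli : l < i := hl
      simp only [hz, Matrix.sub_apply, rhoUT ht w' i l hli, rhoUT ht w i l hli, sub_zero]
    obtain ⟨c, hcz, hcrep⟩ := repS ht hdiag hspan hzB hzlow
    set g : Fin h → ℕ := fun k => ((w'.1 i k : ℕ)) with hg
    set g' : Fin h → ℕ := fun k => ((w.1 i k : ℕ)) with hg'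
    set Δ : ℤ_[p] := (((w'.2 i : ℕ)) : ℤ_[p]) - (((w.2 i : ℕ)) : ℤ_[p]) with hΔ
    have heq : ∀ k : Fin h, ((g k : ℤ_[p]) - (g' k : ℤ_[p]))
        = (∑ j, (c j - if j = i then Δ else 0) • T j) k := by
      intro k
      rw [sum_sub_single ht c i Δ, ← hcrep]
      have hzk : z k = ((g k : ℤ_[p]) + ((w'.2 i : ℕ) : ℤ_[p]) * T i k)
          - ((g' k : ℤ_[p]) + ((w.2 i : ℕ) : ℤ_[p]) * T i k) := by
        simp only [hz, Matrix.sub_apply, rhoMat, hg, hg']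
      simp only [Pi.sub_apply, Pi.smul_apply, smul_eq_mul]
      rw [hzk, hΔ]
      ring
    obtain ⟨hgg, hc0⟩ := uniqNat ht hdiag
      (fun j => ModN_le T (w'.1 i j).isLt) (fun j => ModN_le T (w.1 i j).isLt) heq
    have hci : c i = Δ := by
      have h0 := hc0 i
      rw [if_pos rfl] at h0
      exact sub_eq_zero.mp h0
    -- divisibility gives p ∣ c i
    have hzi : z i = c i * T i i := by
      rw [hcrep]
      exact sumeval ht (fun j hj => hcz j hj)
    have hpdvd : (p : ℤ_[p]) ∣ c i := by
      obtain ⟨e, he⟩ := (hH i).2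
      have he2 : z i = ((p : ℤ_[p]) * T i i) * e := he
      have hcc : c i * T i i = ((p : ℤ_[p]) * e) * T i i := by
        rw [← hzi, he2]; ring
      exact ⟨e, mul_right_cancel₀ (hdiag i) hcc⟩
    have haa : ((w.2 i : ℕ)) = ((w'.2 i : ℕ)) := by
      rw [hci, hΔ] at hpdvd
      have hc2 : ((((w'.2 i : ℕ) : ℤ) - ((w.2 i : ℕ) : ℤ) : ℤ) : ℤ_[p])
          = (((w'.2 i : ℕ)) : ℤ_[p]) - (((w.2 i : ℕ)) : ℤ_[p]) := by push_cast; ring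
      have hnorm : ‖((((w'.2 i : ℕ) : ℤ) - ((w.2 i : ℕ) : ℤ) : ℤ) : ℤ_[p])‖ < 1 := by
        rw [hc2]
        exact (PadicInt.norm_lt_one_iff_dvd _).mpr hpdvd
      have hint : (p : ℤ) ∣ (((w'.2 i : ℕ) : ℤ) - ((w.2 i : ℕ) : ℤ)) :=
        (PadicInt.norm_int_lt_one_iff_dvd _).mp hnorm
      have hmod : ((w.2 i : ℕ)) ≡ ((w'.2 i : ℕ)) [MOD p] := by
        rw [Nat.modEq_iff_dvd]
        exact_mod_cast hint
      exact hmod.eq_of_lt_of_lt (w.2 i).isLt (w'.2 i).isLt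
    exact ⟨fun k => (congrFun hgg k).symm, haa⟩
  -- assemble
  have h1 : w.1 = w'.1 := by
    funext i k
    exact Fin.ext ((hkey i).1 k)
  have h2 : w.2 = w'.2 := by
    funext i
    exact Fin.ext ((hkey i).2)
  exact Prod.ext h1 h2
end Part

section Part2
variable {p : ℕ} [Fact p.Prime] {h : ℕ}
variable {T : Matrix (Fin h) (Fin h) ℤ_[p]} {B : Submodule ℤ_[p] (Fin h → ℤ_[p])}

/-- type of "all digits nonzero" diagonal parameters -/
abbrev GA (p h : ℕ) : Type := Fin h → {v : Fin p // (v : ℕ) ≠ 0}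

noncomputable def oneW (T : Matrix (Fin h) (Fin h) ℤ_[p]) (a : GA p h) : Wsp T :=
  ⟨fun i j => ⟨0, ModN_pos T i j⟩, fun i => (a i).1⟩

lemma rho_oneW (T : Matrix (Fin h) (Fin h) ℤ_[p]) (a : GA p h) (i j : Fin h) :
    rhoMat T (oneW T a) i j = (((a i : Fin p) : ℕ) : ℤ_[p]) * T i j := by
  rw [rhoMat, oneW]
  simp

lemma LP3a (ht : UT T) (hdiag : ∀ l : Fin h, T l l ≠ 0)
    (hspan : Submodule.span ℤ_[p] (Set.range fun i : Fin h => T i) = B)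
    (hB : IsOpen (B : Set (Fin h → ℤ_[p])))
    (x : Matrix (Fin h) (Fin h) ℤ_[p]) (hx : UT x)
    (hxspan : Submodule.span ℤ_[p] (Set.range fun i : Fin h => x i) = B) :
    ∃ a : GA p h, Hmat B T (x - rhoMat T (oneW T a)) := by
  haveI : NeZero p := ⟨(Fact.out : p.Prime).ne_zero⟩
  have htB : ∀ j : Fin h, T j ∈ B := fun j => by
    rw [← hspan]; exact Submodule.subset_span (Set.mem_range_self j)
  have hcond := cond_of_span ht hdiag hspan hB hx hxspan
  have hrowdec : ∀ i : Fin h, ∃ c : Fin h → ℤ_[p],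
      (∀ j : Fin h, (j : ℕ) < (i : ℕ) → c j = 0) ∧ x i = ∑ j, c j • T j ∧ ‖c i‖ = 1 := by
    intro i
    obtain ⟨c, hcz, hcrep⟩ := repS ht hdiag hspan (hcond i).1 (fun l hl => hx i l hl)
    refine ⟨c, hcz, hcrep, ?_⟩
    have hxii : x i i = c i * T i i := by
      rw [hcrep]; exact sumeval ht (fun j hj => hcz j hj)
    have hn := (hcond i).2
    rw [hxii, norm_mul] at hn
    have : ‖c i‖ * ‖T i i‖ = 1 * ‖T i i‖ := by rw [one_mul]; exact hn
    exact mul_right_cancel₀ (norm_ne_zero_iff.mpr (hdiag i)) this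
  choose C hCz hCrep hCu using hrowdec
  have hane : ∀ i : Fin h, (PadicInt.toZMod (C i i)).val ≠ 0 := by
    intro i hval
    have h0 : PadicInt.toZMod (C i i) = 0 := by
      rwa [ZMod.val_eq_zero] at hval
    have hdvd : (p : ℤ_[p]) ∣ C i i := by
      rw [← Ideal.mem_span_singleton, ← PadicInt.maximalIdeal_eq_span_p, ← PadicInt.ker_toZMod,
        RingHom.mem_ker]
      exact h0
    have := (PadicInt.norm_lt_one_iff_dvd _).mpr hdvd
    rw [hCu i] at this
    exact absurd this (by norm_num)
  refine ⟨fun i => ⟨⟨(PadicInt.toZMod (C i i)).val, ZMod.val_lt _⟩, hane i⟩, fun i => ?_⟩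
  have hrowval : (x - rhoMat T (oneW T (fun i => ⟨⟨(PadicInt.toZMod (C i i)).val,
      ZMod.val_lt _⟩, hane i⟩))) i
      = (∑ j, C i j • T j) - (((PadicInt.toZMod (C i i)).val : ℕ) : ℤ_[p]) • T i := by
    funext l
    rw [Matrix.sub_apply, rho_oneW]
    have hx2 : x i l = (∑ j, C i j • T j) l := congrFun (hCrep i) l
    simp only [Pi.sub_apply, Pi.smul_apply, smul_eq_mul]
    rw [hx2]
  rw [show ((x - rhoMat T (oneW T (fun i => ⟨⟨(PadicInt.toZMod (C i i)).val,
      ZMod.val_lt _⟩, hane i⟩))) i ∈ B ∧ ((p : ℤ_[p]) * T i i) ∣ (x - rhoMat T (oneW T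
      (fun i => ⟨⟨(PadicInt.toZMod (C i i)).val, ZMod.val_lt _⟩, hane i⟩))) i i) =
      _ from rfl]
  rw [hrowval]
  exact mkRow ht hdiag htB (hCz i) (pdvd_sub_digit (C i i))

lemma LP3b (ht : UT T) (hdiag : ∀ l : Fin h, T l l ≠ 0)
    (hspan : Submodule.span ℤ_[p] (Set.range fun i : Fin h => T i) = B)
    (a : GA p h) (x : Matrix (Fin h) (Fin h) ℤ_[p]) (hx : UT x)
    (hH : Hmat B T (x - rhoMat T (oneW T a))) :
    Submodule.span ℤ_[p] (Set.range fun i : Fin h => x i) = B := by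
  haveI : NeZero p := ⟨(Fact.out : p.Prime).ne_zero⟩
  have hppos := (Fact.out : p.Prime).pos
  have htB : ∀ j : Fin h, T j ∈ B := fun j => by
    rw [← hspan]; exact Submodule.subset_span (Set.mem_range_self j)
  apply span_of_cond ht hdiag hspan hx
  intro i
  set av : ℕ := ((a i : Fin p) : ℕ) with hav
  have havp : av < p := (a i : Fin p).isLt
  have havne : av ≠ 0 := (a i).2
  have hrow : x i = (x - rhoMat T (oneW T a)) i + (av : ℤ_[p]) • T i := by
    funext l
    simp only [Matrix.sub_apply, Pi.add_apply, Pi.sub_apply, Pi.smul_apply, smul_eq_mul,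
      rho_oneW]
    ring
  have hnav : ‖((av : ℕ) : ℤ_[p])‖ = 1 := by
    refine le_antisymm (PadicInt.norm_le_one _) ?_
    by_contra hlt
    push_neg at hlt
    have : ‖(((av : ℤ)) : ℤ_[p])‖ < 1 := by
      rw [show (((av : ℤ)) : ℤ_[p]) = ((av : ℕ) : ℤ_[p]) by push_cast; ring]
      exact hlt
    have hdvd := (PadicInt.norm_int_lt_one_iff_dvd _).mp this
    have : p ∣ av := Int.ofNat_dvd.mp hdvd
    have := Nat.le_of_dvd (Nat.pos_of_ne_zero havne) this
    omega
  constructor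
  · rw [hrow]
    exact B.add_mem (hH i).1 (B.smul_mem _ (htB i))
  · have hd : ‖(x - rhoMat T (oneW T a)) i i‖ < ‖(av : ℤ_[p]) * T i i‖ := by
      have h1 : ‖(x - rhoMat T (oneW T a)) i i‖ ≤ ‖(p : ℤ_[p]) * T i i‖ := by
        rw [← PadicInt.dvd_iff_norm_le' (mul_ne_zero
          (Nat.cast_ne_zero.mpr (Fact.out : p.Prime).ne_zero) (hdiag i))]
        exact (hH i).2
      have h2 : ‖(p : ℤ_[p]) * T i i‖ < ‖T i i‖ := by
        rw [norm_mul, PadicInt.norm_p]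
        have hTpos : 0 < ‖T i i‖ := norm_pos_iff.mpr (hdiag i)
        have hinv : ((p : ℝ))⁻¹ < 1 := by
          rw [inv_lt_one_iff₀]
          right
          exact_mod_cast (Fact.out : p.Prime).one_lt
        exact mul_lt_of_lt_one_left hTpos hinv
      calc ‖(x - rhoMat T (oneW T a)) i i‖ ≤ ‖(p : ℤ_[p]) * T i i‖ := h1
        _ < ‖T i i‖ := h2
        _ = ‖(av : ℤ_[p]) * T i i‖ := by rw [norm_mul, hnav, one_mul]
    have hxii : x i i = (av : ℤ_[p]) * T i i + (x - rhoMat T (oneW T a)) i i := by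
      have := congrFun hrow i
      simp only [Pi.add_apply, Pi.smul_apply, smul_eq_mul] at this
      rw [this]; ring
    rw [hxii, PadicInt.norm_add_eq_max_of_ne (ne_of_gt hd),
      max_eq_left (le_of_lt hd), norm_mul, hnav, one_mul]

end Part2

section Master
variable {p : ℕ} [Fact p.Prime] {h : ℕ}

lemma card_Wsp (T : Matrix (Fin h) (Fin h) ℤ_[p]) :
    Fintype.card (Wsp T) = (∏ j : Fin h, (p ^ pexp (T j j)) ^ ((j : ℕ) + 1)) * p ^ h := by
  rw [Fintype.card_prod, Fintype.card_pi]
  congr 1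
  · calc ∏ i : Fin h, Fintype.card ((j : Fin h) → Fin (ModNT T i j))
        = ∏ i : Fin h, ∏ j : Fin h, ModNT T i j := by
          apply Finset.prod_congr rfl
          intro i _
          rw [Fintype.card_pi]
          exact Finset.prod_congr rfl fun j _ => Fintype.card_fin _
      _ = ∏ j : Fin h, ∏ i : Fin h, ModNT T i j := Finset.prod_comm
      _ = ∏ j : Fin h, (p ^ pexp (T j j)) ^ ((j : ℕ) + 1) := by
          apply Finset.prod_congr rfl
          intro j _
          have hfil : Finset.univ.filter (fun i : Fin h => i ≤ j) = Finset.Iic j := by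
            ext x; simp
          calc ∏ i : Fin h, ModNT T i j
              = ∏ i ∈ Finset.univ.filter (fun i : Fin h => i ≤ j), p ^ pexp (T j j) := by
                rw [Finset.prod_filter]
                exact Finset.prod_congr rfl fun i _ => by rw [ModNT]
            _ = (p ^ pexp (T j j)) ^ (Finset.univ.filter (fun i : Fin h => i ≤ j)).card :=
                Finset.prod_const _
            _ = (p ^ pexp (T j j)) ^ ((j : ℕ) + 1) := by rw [hfil, Fin.card_Iic]
  · rw [Fintype.card_fun, Fintype.card_fin, Fintype.card_fin]

lemma card_GA : Fintype.card (GA p h) = (p - 1) ^ h := by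
  haveI : NeZero p := ⟨(Fact.out : p.Prime).ne_zero⟩
  have hsub : Fintype.card {v : Fin p // (v : ℕ) ≠ 0} = p - 1 := by
    have he : ∀ v : Fin p, (v : ℕ) ≠ 0 ↔ ¬ (v = 0) := by
      intro v
      constructor
      · intro hv h0; exact hv (by rw [h0]; rfl)
      · intro hv h0; exact hv (Fin.ext h0)
    rw [Fintype.card_congr (Equiv.subtypeEquivRight he), Fintype.card_subtype_compl,
      Fintype.card_subtype_eq, Fintype.card_fin]
  rw [Fintype.card_fun, hsub, Fintype.card_fin]

lemma finalReal (T : Matrix (Fin h) (Fin h) ℤ_[p]) (hdiag : ∀ i : Fin h, T i i ≠ 0) :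
    ENNReal.ofReal ((1 - (p : ℝ)⁻¹) ^ h * ∏ i : Fin h, ‖T i i‖ ^ ((i : ℕ) + 1))
    = (((p - 1) ^ h : ℕ) : ℝ≥0∞) *
      ((((∏ j : Fin h, (p ^ pexp (T j j)) ^ ((j : ℕ) + 1)) * p ^ h : ℕ)) : ℝ≥0∞)⁻¹ := by
  have hppos : 0 < p := (Fact.out : p.Prime).pos
  have hp1 : 1 ≤ p := hppos
  have hprpos : (0 : ℝ) < p := by exact_mod_cast hppos
  set P : ℕ := ∏ j : Fin h, (p ^ pexp (T j j)) ^ ((j : ℕ) + 1) with hP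
  have hPpos : 0 < P := Finset.prod_pos fun j _ => pow_pos (pow_pos hppos _) _
  have hnorm : ∀ i : Fin h, ‖T i i‖ = (((p ^ pexp (T i i) : ℕ)) : ℝ)⁻¹ := by
    intro i
    rw [norm_eq_pexp (hdiag i)]
    rw [zpow_neg, zpow_natCast]
    push_cast
    ring
  have hreal : (1 - (p : ℝ)⁻¹) ^ h * ∏ i : Fin h, ‖T i i‖ ^ ((i : ℕ) + 1)
      = (((p - 1) ^ h : ℕ) : ℝ) * (((P * p ^ h : ℕ)) : ℝ)⁻¹ := by
    have h1 : (1 - (p : ℝ)⁻¹) = ((p - 1 : ℕ) : ℝ) * ((p : ℝ))⁻¹ := by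
      rw [Nat.cast_sub hp1, Nat.cast_one]
      field_simp
    have h2 : ∏ i : Fin h, ‖T i i‖ ^ ((i : ℕ) + 1) = ((P : ℕ) : ℝ)⁻¹ := by
      rw [hP]
      push_cast
      rw [← Finset.prod_inv_distrib]
      apply Finset.prod_congr rfl
      intro i _
      rw [hnorm i, ← inv_pow]
      push_cast
      ring
    rw [h1, mul_pow, h2]
    push_cast
    rw [mul_inv]
    ring
  rw [hreal, ENNReal.ofReal_mul (by positivity), ENNReal.ofReal_natCast,
    ENNReal.ofReal_inv_of_pos (by positivity : (0:ℝ) < ((P * p ^ h : ℕ) : ℝ)),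
    ENNReal.ofReal_natCast]

end Master

/-- The additive group `Tr(h, ℤ_p)` of upper triangular `h × h` matrices over
the `p`-adic integers. -/
def triMatrices (p h : ℕ) [Fact p.Prime] :
    AddSubgroup (Matrix (Fin h) (Fin h) ℤ_[p]) where
  carrier := {t | ∀ i j : Fin h, j < i → t i j = 0}
  zero_mem' := fun _ _ _ => rfl
  add_mem' := by
    intro a b ha hb i j hij
    simp [Matrix.add_apply, ha i j hij, hb i j hij]
  neg_mem' := by
    intro a ha i j hij
    simp [Matrix.neg_apply, ha i j hij]

theorem master (p h : ℕ) [Fact p.Prime]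
    [MeasurableSpace ↥(triMatrices p h)] [BorelSpace ↥(triMatrices p h)]
    (μ : Measure ↥(triMatrices p h)) [μ.IsAddHaarMeasure] (hμ : μ Set.univ = 1)
    (B : Submodule ℤ_[p] (Fin h → ℤ_[p])) (hB : IsOpen (B : Set (Fin h → ℤ_[p])))
    (t : ↥(triMatrices p h))
    (hspan : Submodule.span ℤ_[p]
      (Set.range fun i : Fin h => (t : Matrix (Fin h) (Fin h) ℤ_[p]) i) = B) :
    IsOpen {u : ↥(triMatrices p h) | Submodule.span ℤ_[p]
      (Set.range fun i : Fin h => (u : Matrix (Fin h) (Fin h) ℤ_[p]) i) = B} ∧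
    μ {u : ↥(triMatrices p h) | Submodule.span ℤ_[p]
      (Set.range fun i : Fin h => (u : Matrix (Fin h) (Fin h) ℤ_[p]) i) = B}
      = ENNReal.ofReal ((1 - (p : ℝ)⁻¹) ^ h *
        ∏ i : Fin h, ‖(t : Matrix (Fin h) (Fin h) ℤ_[p]) i i‖ ^ ((i : ℕ) + 1)) := by
  classical
  have hppos : 0 < p := (Fact.out : p.Prime).pos
  have hpne : (p : ℤ_[p]) ≠ 0 := Nat.cast_ne_zero.mpr (Fact.out : p.Prime).ne_zero
  set T : Matrix (Fin h) (Fin h) ℤ_[p] := (t : Matrix (Fin h) (Fin h) ℤ_[p]) with hT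
  have ht : UT T := t.2
  have hdiag : ∀ k : Fin h, T k k ≠ 0 := diag_ne ht hspan hB
  have hUT : ∀ u : ↥(triMatrices p h), UT (u : Matrix (Fin h) (Fin h) ℤ_[p]) := fun u => u.2
  -- the subgroup-like set and cosets
  set Hs : Set ↥(triMatrices p h) :=
    {u | Hmat B T ((u : Matrix (Fin h) (Fin h) ℤ_[p]))} with hHs
  have hrhomem : ∀ w : Wsp T, rhoMat T w ∈ triMatrices p h := fun w => rhoUT ht w
  set ρ : Wsp T → ↥(triMatrices p h) := fun w => ⟨rhoMat T w, hrhomem w⟩ with hρ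
  set Cs : Wsp T → Set ↥(triMatrices p h) :=
    fun w => {u | Hmat B T ((u : Matrix (Fin h) (Fin h) ℤ_[p]) - rhoMat T w)} with hCs
  have hpre : ∀ w : Wsp T, Cs w = (fun u => u - ρ w) ⁻¹' Hs := by
    intro w
    ext u
    simp only [hCs, hHs, Set.mem_setOf_eq, Set.mem_preimage, AddSubgroup.coe_sub]
    exact Iff.rfl
  -- closedness
  have hBclosed : IsClosed (B : Set (Fin h → ℤ_[p])) :=
    AddSubgroup.isClosed_of_isOpen B.toAddSubgroup hB
  have hrowcont : ∀ i : Fin h,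
      Continuous fun u : ↥(triMatrices p h) => (u : Matrix (Fin h) (Fin h) ℤ_[p]) i :=
    fun i => continuous_pi fun j => continuous_subtype_val.matrix_elem i j
  have hHsclosed : IsClosed Hs := by
    have heq : Hs = ⋂ i : Fin h,
        (((fun u : ↥(triMatrices p h) => (u : Matrix (Fin h) (Fin h) ℤ_[p]) i) ⁻¹'
          (B : Set (Fin h → ℤ_[p]))) ∩
        ((fun u : ↥(triMatrices p h) => (u : Matrix (Fin h) (Fin h) ℤ_[p]) i i) ⁻¹'
          {z : ℤ_[p] | ‖z‖ ≤ ‖(p : ℤ_[p]) * T i i‖})) := by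
      ext u
      simp only [hHs, Set.mem_setOf_eq, Set.mem_iInter, Set.mem_inter_iff, Set.mem_preimage]
      unfold Hmat
      refine forall_congr' fun i => and_congr Iff.rfl ?_
      rw [PadicInt.dvd_iff_norm_le' (mul_ne_zero hpne (hdiag i))]
    rw [heq]
    exact isClosed_iInter fun i => (hBclosed.preimage (hrowcont i)).inter
      ((isClosed_le continuous_norm continuous_const).preimage
        (continuous_subtype_val.matrix_elem i i))
  have hCsclosed : ∀ w, IsClosed (Cs w) := fun w =>
    (hpre w) ▸ hHsclosed.preimage (continuous_sub_right (ρ w))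
  have hCmeas : ∀ w, MeasurableSet (Cs w) := fun w => (hCsclosed w).measurableSet
  have hμC : ∀ w, μ (Cs w) = μ Hs := by
    intro w
    have : (fun u : ↥(triMatrices p h) => u - ρ w) = (fun u => (-(ρ w)) + u) := by
      funext u; rw [sub_eq_neg_add]
    rw [hpre w, this, measure_preimage_add]
  -- partition facts
  have hcover : ∀ u : ↥(triMatrices p h), ∃ w, u ∈ Cs w := by
    intro u
    obtain ⟨w, hw⟩ := LP1 ht hdiag hspan (u : Matrix (Fin h) (Fin h) ℤ_[p]) (hUT u)
    exact ⟨w, hw⟩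
  have huniq : ∀ w w' u, u ∈ Cs w → u ∈ Cs w' → w = w' := by
    intro w w' u hw hw'
    apply LP2 ht hdiag hspan w w'
    have hsub := Hmat_sub hw hw'
    rwa [show ((u : Matrix (Fin h) (Fin h) ℤ_[p]) - rhoMat T w)
      - ((u : Matrix (Fin h) (Fin h) ℤ_[p]) - rhoMat T w') = rhoMat T w' - rhoMat T w
      by abel] at hsub
  have hdisj : Pairwise (Function.onFun Disjoint Cs) := fun w w' hne =>
    Set.disjoint_left.mpr fun u hu hu' => hne (huniq w w' u hu hu')
  have hunion : (⋃ w, Cs w) = Set.univ :=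
    Set.eq_univ_of_forall fun u => Set.mem_iUnion.mpr (hcover u)
  -- total measure
  haveI : Nonempty (Wsp T) := ⟨⟨fun i j => ⟨0, ModN_pos T i j⟩, fun i => ⟨0, hppos⟩⟩⟩
  have hNμ : (Fintype.card (Wsp T) : ℝ≥0∞) * μ Hs = 1 := by
    have hsum : μ (⋃ w, Cs w) = ∑' w, μ (Cs w) := measure_iUnion hdisj hCmeas
    rw [hunion, hμ] at hsum
    have hsum2 : ∑' w : Wsp T, μ (Cs w) = (Fintype.card (Wsp T) : ℝ≥0∞) * μ Hs := by
      rw [tsum_fintype, Finset.sum_congr rfl (fun w _ => hμC w), Finset.sum_const,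
        Finset.card_univ, nsmul_eq_mul]
    rw [← hsum2]
    exact hsum.symm
  have hN0 : (Fintype.card (Wsp T) : ℝ≥0∞) ≠ 0 :=
    Nat.cast_ne_zero.mpr Fintype.card_ne_zero
  have hμHs : μ Hs = (Fintype.card (Wsp T) : ℝ≥0∞)⁻¹ := by
    have := congrArg (fun x => (Fintype.card (Wsp T) : ℝ≥0∞)⁻¹ * x) hNμ
    simp only [← mul_assoc, ENNReal.inv_mul_cancel hN0 (ENNReal.natCast_ne_top _),
      one_mul, mul_one] at this
    exact this
  -- the main set as a union of cosets
  set MB : Set ↥(triMatrices p h) := {u : ↥(triMatrices p h) | Submodule.span ℤ_[p]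
    (Set.range fun i : Fin h => (u : Matrix (Fin h) (Fin h) ℤ_[p]) i) = B} with hMBdef
  have hMBeq : MB = ⋃ a : GA p h, Cs (oneW T a) := by
    ext u
    simp only [hMBdef, Set.mem_setOf_eq, Set.mem_iUnion]
    constructor
    · intro hsp
      obtain ⟨a, ha⟩ := LP3a ht hdiag hspan hB (u : Matrix (Fin h) (Fin h) ℤ_[p]) (hUT u) hsp
      exact ⟨a, ha⟩
    · rintro ⟨a, ha⟩
      exact LP3b ht hdiag hspan a (u : Matrix (Fin h) (Fin h) ℤ_[p]) (hUT u) ha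
  -- openness
  have hHsopen : IsOpen Hs := by
    set w0 : Wsp T := ⟨fun i j => ⟨0, ModN_pos T i j⟩, fun i => ⟨0, hppos⟩⟩ with hw0
    have hrho0 : rhoMat T w0 = 0 := by
      funext i j
      rw [rhoMat]
      simp [hw0]
    have hHsw0 : Hs = Cs w0 := by
      ext u
      simp only [hHs, hCs, Set.mem_setOf_eq, hrho0, sub_zero]
    have hcompl : Hs = (⋃ w ∈ {w : Wsp T | w ≠ w0}, Cs w)ᶜ := by
      ext u
      simp only [Set.mem_compl_iff, Set.mem_iUnion, Set.mem_setOf_eq, not_exists]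
      constructor
      · intro hu w hwne huw
        exact hwne (huniq w w0 u huw (hHsw0 ▸ hu))
      · intro hu
        obtain ⟨w, hw⟩ := hcover u
        by_cases hww : w = w0
        · rw [hHsw0]; rwa [hww] at hw
        · exact absurd hw (hu w hww)
    rw [hcompl]
    exact (Set.Finite.isClosed_biUnion (Set.toFinite _) fun w _ => hCsclosed w).isOpen_compl
  have hCsopen : ∀ w, IsOpen (Cs w) := fun w =>
    (hpre w) ▸ hHsopen.preimage (continuous_sub_right (ρ w))
  constructor
  · rw [hMBeq]
    exact isOpen_iUnion fun a => hCsopen _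
  · -- measure computation
    have honeWinj : Function.Injective (fun a : GA p h => oneW T a) := by
      intro a a' haa
      funext i
      have := congrArg Prod.snd haa
      have h2 := congrFun this i
      exact Subtype.ext h2
    have hdisjGA : Pairwise (Function.onFun Disjoint fun a : GA p h => Cs (oneW T a)) :=
      fun a a' hne => Set.disjoint_left.mpr fun u hu hu' =>
        hne (honeWinj (huniq (oneW T a) (oneW T a') u hu hu'))
    have hsumGA : μ MB = ∑' a : GA p h, μ (Cs (oneW T a)) := by
      rw [hMBeq]
      exact measure_iUnion hdisjGA fun a => hCmeas _
    rw [hsumGA, tsum_fintype,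
      Finset.sum_congr rfl (fun a _ => (hμC (oneW T a)).trans hμHs),
      Finset.sum_const, Finset.card_univ, nsmul_eq_mul]
    rw [card_GA, card_Wsp, finalReal T hdiag]

/-- For an open subgroup `B` of `ℤ_p^h`, the set `M(B)` of upper triangular
matrices whose rows generate `B` (as a `ℤ_p`-module) is open in `Tr(h, ℤ_p)`,
and its normalized Haar measure equals `(1 - p⁻¹)^h · ∏ᵢ |t_ii|_p^i` for any
`t ∈ M(B)` (rows and diagonal indexed by `i = 1, …, h`). -/
theorem stmt19 (p h : ℕ) [Fact p.Prime]
    [MeasurableSpace ↥(triMatrices p h)] [BorelSpace ↥(triMatrices p h)]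
    (μ : Measure ↥(triMatrices p h)) [μ.IsAddHaarMeasure] (hμ : μ Set.univ = 1)
    (B : Submodule ℤ_[p] (Fin h → ℤ_[p])) (hB : IsOpen (B : Set (Fin h → ℤ_[p]))) :
    IsOpen {t : ↥(triMatrices p h) |
        Submodule.span ℤ_[p] (Set.range fun i : Fin h => (t : Matrix (Fin h) (Fin h) ℤ_[p]) i) = B} ∧
      ∀ t : ↥(triMatrices p h),
        Submodule.span ℤ_[p]
            (Set.range fun i : Fin h => (t : Matrix (Fin h) (Fin h) ℤ_[p]) i) = B →
        μ {u : ↥(triMatrices p h) |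
            Submodule.span ℤ_[p]
              (Set.range fun i : Fin h => (u : Matrix (Fin h) (Fin h) ℤ_[p]) i) = B} =
          ENNReal.ofReal ((1 - (p : ℝ)⁻¹) ^ h *
            ∏ i : Fin h,
              ‖(t : Matrix (Fin h) (Fin h) ℤ_[p]) i i‖ ^ ((i : ℕ) + 1)) := by
  constructor
  · rcases Set.eq_empty_or_nonempty {t : ↥(triMatrices p h) |
        Submodule.span ℤ_[p]
          (Set.range fun i : Fin h => (t : Matrix (Fin h) (Fin h) ℤ_[p]) i) = B} with
      he | ⟨t0, ht0⟩
    · rw [he]; exact isOpen_empty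
    · exact (master p h μ hμ B hB t0 ht0).1
  · intro t htt
    exact (master p h μ hμ B hB t htt).2
end
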